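/- arXiv:math/0509126 — 7 statements merged into one kernel-verified Lean document; each statement's English description precedes it below -/
import Mathlib

section
/- Let a, b ∈ ℕ^n with a_1+⋯+a_n = b_1+⋯+b_n = d. Then a ≥_Bor b (i.e., there exist α_1,…,α_{n-1} ∈ ℕ with a - b = Σ_{j=1}^{n-1} α_j(e_j - e_{j+1})) if and only if there exists an upper triangular matrix M ∈ ℕ^{n×n} (M_{ij} = 0 for j < i) whose j-th column sums to b_j for all j and whose i-th row sums to a_i for all i. -/
open MvPolynomial

namespace Fumasoli

/-- The `i`-th standard basis exponent vector `e_i`. -/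
def stdExp (ν : ℕ) (i : Fin ν) : Fin ν → ℕ := fun k => if k = i then 1 else 0

/-- The Borel order: `a ≥_Bor b` iff `a - b` is a nonnegative integer combination of the
vectors `e_j - e_{j+1}` for `1 ≤ j < ν`.  Here `α` records the coefficients, with
`α 0 = 0` and `α j = 0` for `j ≥ ν`, and component `i` (0-indexed) of `a - b` equals
`α (i+1) - α i`. -/
def BorelGE {ν : ℕ} (a b : Fin ν → ℕ) : Prop :=
  ∃ α : ℕ → ℕ, α 0 = 0 ∧ (∀ j, ν ≤ j → α j = 0) ∧
    ∀ i : Fin ν, (a i : ℤ) - (b i : ℤ) = (α (i.val + 1) : ℤ) - (α i.val : ℤ)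

/-- `M` is an upper triangular matrix of nonnegative integers with row sums `a` and
column sums `b`, i.e. `M ∈ U(a,b)`. -/
def IsTransferMatrix {ν : ℕ} (M : Matrix (Fin ν) (Fin ν) ℕ) (a b : Fin ν → ℕ) : Prop :=
  (∀ i j : Fin ν, (j : ℕ) < (i : ℕ) → M i j = 0) ∧
  (∀ j, ∑ i, M i j = b j) ∧ (∀ i, ∑ j, M i j = a i)

/-- Integer-matrix version of `IsTransferMatrix`, with integer row and column sums. -/
def IsTransferMatrixZ {ν : ℕ} (M : Matrix (Fin ν) (Fin ν) ℤ) (a b : Fin ν → ℤ) : Prop :=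
  (∀ i j : Fin ν, (j : ℕ) < (i : ℕ) → M i j = 0) ∧ (∀ i j : Fin ν, 0 ≤ M i j) ∧
  (∀ j, ∑ i, M i j = b j) ∧ (∀ i, ∑ j, M i j = a i)

/-- `m(ρ)`: the largest (1-indexed) position where `ρ` is nonzero, or `1` if `ρ = 0`. -/
def mIdx {ν : ℕ} (ρ : Fin ν → ℤ) : ℕ :=
  max 1 ((Finset.univ.filter fun i => ρ i ≠ 0).sup fun i => (i : ℕ) + 1)

/-- `ρ_{m(ρ)} > 0`, expressed via the (1-indexed) position `m(ρ)`. -/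
def mPos {ν : ℕ} (ρ : Fin ν → ℤ) : Prop :=
  ∃ i : Fin ν, (i : ℕ) + 1 = mIdx ρ ∧ 0 < ρ i

/-- A term order on exponent vectors: a translation-invariant strict linear order. -/
structure TermOrder (ν : ℕ) where
  lt : (Fin ν → ℕ) → (Fin ν → ℕ) → Prop
  irrefl : ∀ a, ¬ lt a a
  trans : ∀ a b c, lt a b → lt b c → lt a c
  total : ∀ a b, lt a b ∨ a = b ∨ lt b a
  add_right : ∀ a b c, lt a b → lt (a + c) (b + c)

/-- Admissibility of a term order: `X_1 > X_2 > ⋯ > X_ν` and it refines total degree. -/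
def TermOrder.IsAdmissible {ν : ℕ} (τ : TermOrder ν) : Prop :=
  (∀ i j : Fin ν, i < j → τ.lt (stdExp ν j) (stdExp ν i)) ∧
  (∀ a b : Fin ν → ℕ, (∑ i, a i) < (∑ i, b i) → τ.lt a b)

/-- The (degree) reverse lexicographic order: `a < b` iff `deg a < deg b`, or the degrees
agree and the last position where `a` and `b` differ has `a` strictly bigger there. -/
def rlexLT {ν : ℕ} (a b : Fin ν → ℕ) : Prop :=
  (∑ i, a i) < (∑ i, b i) ∨
  ((∑ i, a i) = (∑ i, b i) ∧ ∃ k : Fin ν, b k < a k ∧ ∀ j : Fin ν, k < j → a j = b j)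

/-- Exponent vector as a finitely supported function. -/
noncomputable def expF {ν : ℕ} (a : Fin ν → ℕ) : Fin ν →₀ ℕ := Finsupp.equivFunOnFinite.symm a

/-- The monomial `X^a`. -/
noncomputable def mono (K : Type*) [CommSemiring K] {ν : ℕ} (a : Fin ν → ℕ) :
    MvPolynomial (Fin ν) K := monomial (expF a) 1

/-- `m` is the leading monomial (w.r.t. the strict order `lt`) of `f`. -/
def IsLeadOf {K : Type*} [CommSemiring K] {ν : ℕ}
    (lt : (Fin ν → ℕ) → (Fin ν → ℕ) → Prop)
    (f : MvPolynomial (Fin ν) K) (m : Fin ν →₀ ℕ) : Prop :=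
  m ∈ f.support ∧ ∀ m' ∈ f.support, m' ≠ m → lt (⇑m') (⇑m)

/-- The initial ideal of `I` w.r.t. the strict order `lt`: generated by the leading
monomials of the nonzero elements of `I`. -/
noncomputable def initialIdeal {K : Type*} [CommSemiring K] {ν : ℕ}
    (lt : (Fin ν → ℕ) → (Fin ν → ℕ) → Prop)
    (I : Ideal (MvPolynomial (Fin ν) K)) : Ideal (MvPolynomial (Fin ν) K) :=
  Ideal.span {p | ∃ f ∈ I, f ≠ 0 ∧ ∃ m, IsLeadOf lt f m ∧ p = monomial m (1 : K)}

/-- `G` is a Gröbner basis of `I` w.r.t. `lt`: the elements of `G` lie in `I` and their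
leading monomials generate the initial ideal of `I`. -/
noncomputable def IsGroebnerBasis {K : Type*} [CommSemiring K] {ν : ℕ}
    (lt : (Fin ν → ℕ) → (Fin ν → ℕ) → Prop)
    (G : Set (MvPolynomial (Fin ν) K)) (I : Ideal (MvPolynomial (Fin ν) K)) : Prop :=
  (∀ g ∈ G, g ∈ I) ∧
    initialIdeal lt I =
      Ideal.span {p | ∃ g ∈ G, g ≠ 0 ∧ ∃ m, IsLeadOf lt g m ∧ p = monomial m (1 : K)}

/-- The irrelevant maximal ideal `(X_1, …, X_ν)`. -/
noncomputable def irrelIdeal (K : Type*) [CommSemiring K] (ν : ℕ) :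
    Ideal (MvPolynomial (Fin ν) K) := Ideal.span (Set.range X)

/-- Saturation of `I` with respect to the irrelevant maximal ideal. -/
noncomputable def satIdeal {K : Type*} [CommRing K] {ν : ℕ}
    (I : Ideal (MvPolynomial (Fin ν) K)) : Ideal (MvPolynomial (Fin ν) K) :=
  ⨆ k : ℕ, Submodule.colon I ((irrelIdeal K ν ^ k : Ideal (MvPolynomial (Fin ν) K)) : Set (MvPolynomial (Fin ν) K))

/-- Saturation (colon) of `I` with respect to powers of the variable `X_v`. -/
noncomputable def satVar {K : Type*} [CommRing K] {ν : ℕ}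
    (I : Ideal (MvPolynomial (Fin ν) K)) (v : Fin ν) : Ideal (MvPolynomial (Fin ν) K) :=
  ⨆ k : ℕ, Submodule.colon I (Ideal.span {(X v : MvPolynomial (Fin ν) K) ^ k})

/-- The linear change of coordinates by the matrix `g`: `X_j ↦ Σ_i g_{ij} X_i`. -/
noncomputable def actMat (K : Type*) [CommRing K] {ν : ℕ}
    (g : Matrix (Fin ν) (Fin ν) K) :
    MvPolynomial (Fin ν) K →ₐ[K] MvPolynomial (Fin ν) K :=
  aeval fun j => ∑ i, C (g i j) * X i

/-- `g` is unipotent upper triangular. -/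
def IsUnipotent {K : Type*} [CommRing K] {ν : ℕ} (g : Matrix (Fin ν) (Fin ν) K) : Prop :=
  (∀ i j : Fin ν, j < i → g i j = 0) ∧ ∀ i, g i i = 1

/-- `J` is the generic initial ideal of `I` w.r.t. the order `lt`: there is a nonzero
polynomial `h` in the matrix entries such that `in(g(I)) = J` for every invertible `g`
with `h(g) ≠ 0` (a dense Zariski-open set of coordinate changes). -/
noncomputable def IsGin {K : Type*} [CommRing K] {ν : ℕ}
    (lt : (Fin ν → ℕ) → (Fin ν → ℕ) → Prop)
    (I J : Ideal (MvPolynomial (Fin ν) K)) : Prop :=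
  ∃ h : MvPolynomial (Fin ν × Fin ν) K, h ≠ 0 ∧
    ∀ g : Matrix (Fin ν) (Fin ν) K, IsUnit g.det →
      MvPolynomial.eval (fun p => g p.1 p.2) h ≠ 0 →
      initialIdeal lt (Ideal.map (actMat K g) I) = J

/-- `I` is a homogeneous ideal. -/
def IsHomog {K : Type*} [CommSemiring K] {ν : ℕ}
    (I : Ideal (MvPolynomial (Fin ν) K)) : Prop :=
  ∀ f ∈ I, ∀ d : ℕ, homogeneousComponent d f ∈ I

/-- `c + ρ`, as a vector of natural numbers. -/
def shiftVec {ν : ℕ} (ρ : Fin ν → ℤ) (c : Fin ν → ℕ) : Fin ν → ℕ :=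
  fun i => ((c i : ℤ) + ρ i).toNat

/-- The set `C + ρ`. -/
def shiftSet {ν : ℕ} (C : Set (Fin ν → ℕ)) (ρ : Fin ν → ℤ) : Set (Fin ν → ℕ) :=
  {x | ∃ c ∈ C, ∀ i, (x i : ℤ) = (c i : ℤ) + ρ i}

/-- A Borel set: upwards closed under the Borel order. -/
def IsBorelSet {ν : ℕ} (B : Set (Fin ν → ℕ)) : Prop :=
  ∀ a b : Fin ν → ℕ, BorelGE a b → b ∈ B → a ∈ B

/-- `(A, C, ρ)` is a binomial system of degree `d` in `ν` indeterminates. -/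
def IsBinomialSystem {ν : ℕ} (d : ℕ) (A C : Set (Fin ν → ℕ)) (ρ : Fin ν → ℤ) : Prop :=
  (∀ a ∈ A, ∑ i, a i = d) ∧ (∀ c ∈ C, ∑ i, c i = d) ∧
  (∀ c ∈ C, ∀ i, 0 ≤ (c i : ℤ) + ρ i) ∧ (∀ c ∈ C, (∑ i, ((c i : ℤ) + ρ i)) = (d : ℤ)) ∧
  A ∩ C = ∅ ∧ A ∩ shiftSet C ρ = ∅ ∧ C ∩ shiftSet C ρ = ∅ ∧
  IsBorelSet (A ∪ C) ∧ IsBorelSet (A ∪ shiftSet C ρ)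

/-- The ideal `F(A,C,ρ)`, generated by the monomials `X^a` (`a ∈ A`) and the binomials
`X^c - X^{c+ρ}` (`c ∈ C`). -/
noncomputable def Fideal (K : Type*) [CommRing K] {ν : ℕ}
    (A C : Set (Fin ν → ℕ)) (ρ : Fin ν → ℤ) : Ideal (MvPolynomial (Fin ν) K) :=
  Ideal.span ((fun a => mono K a) '' A ∪ (fun c => mono K c - mono K (shiftVec ρ c)) '' C)

/-- Restriction `A_i` of a set of exponent vectors to the first `i` indeterminates:
`A_i = {x : x extended by zeros lies in A}`. -/
def restrSet {ν : ℕ} (i : ℕ) (A : Set (Fin ν → ℕ)) : Set (Fin i → ℕ) :=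
  {x | (fun j : Fin ν => if hj : (j : ℕ) < i then x ⟨j, hj⟩ else 0) ∈ A}

/-- The inclusion `K[X_1,…,X_i] → K[X_1,…,X_ν]`. -/
noncomputable def inclAlg (K : Type*) [CommSemiring K] {i ν : ℕ} (h : i ≤ ν) :
    MvPolynomial (Fin i) K →ₐ[K] MvPolynomial (Fin ν) K :=
  rename (Fin.castLE h)

/-- Dimension of a module: Krull dimension of `R` modulo the annihilator. -/
noncomputable def moduleDim (R M : Type*) [CommRing R] [AddCommGroup M] [Module R M] :
    WithBot (WithTop ℕ) :=
  ringKrullDim (R ⧸ Module.annihilator R M)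

/-- `M` is a Cohen-Macaulay module of dimension `t` (relative to the ideal `I`):
its dimension is `t` and there is a regular sequence on `M` of length `t` inside `I`. -/
def IsCMofDim {R : Type*} [CommRing R] (I : Ideal R) (M : Type*)
    [AddCommGroup M] [Module R M] (t : ℕ) : Prop :=
  moduleDim R M = (t : WithBot (WithTop ℕ)) ∧
    ∃ rs : List R, rs.length = t ∧ (∀ r ∈ rs, r ∈ I) ∧ RingTheory.Sequence.IsRegular M rs

/-- The quotient module `J / J'` of an ideal by a subideal. -/
noncomputable def idealQuot {R : Type*} [CommRing R] (J J' : Ideal R) :=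
  J ⧸ (Submodule.comap (Submodule.subtype J) (J' : Submodule R R))

noncomputable instance idealQuotAddCommGroup {R : Type*} [CommRing R] (J J' : Ideal R) :
    AddCommGroup (idealQuot J J') := by unfold idealQuot; infer_instance

noncomputable instance idealQuotModule {R : Type*} [CommRing R] (J J' : Ideal R) :
    Module R (idealQuot J J') := by unfold idealQuot; infer_instance

/-- A homogeneous ideal `𝔞` is sequentially Cohen-Macaulay: there is a finite strictly
increasing filtration `𝔞 = J_0 ⊊ J_1 ⊊ ⋯ ⊊ J_r = S` by homogeneous ideals such that each
quotient `J_{i+1}/J_i` is Cohen-Macaulay and the dimensions strictly increase. -/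
noncomputable def IsSeqCM {K : Type*} [CommRing K] {ν : ℕ}
    (I : Ideal (MvPolynomial (Fin ν) K)) : Prop :=
  ∃ (r : ℕ) (J : Fin (r + 1) → Ideal (MvPolynomial (Fin ν) K)) (t : Fin r → ℕ),
    J 0 = I ∧ J (Fin.last r) = ⊤ ∧ (∀ i, IsHomog (J i)) ∧
    (∀ i : Fin r, J i.castSucc < J i.succ) ∧
    (∀ i : Fin r, IsCMofDim (irrelIdeal K ν) (idealQuot (J i.succ) (J i.castSucc)) (t i)) ∧
    StrictMono t


/-- `μ_M`: the product over the columns of `M` of the multinomial coefficients of the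
column entries. -/
def muM {ν : ℕ} (M : Matrix (Fin ν) (Fin ν) ℕ) : ℕ :=
  ∏ j, Nat.multinomial Finset.univ (fun i => M i j)

/-- `M + ρ`: add `ρ_j` to the `j`-th diagonal entry of `M` (as a matrix of naturals). -/
def addDiag {ν : ℕ} (M : Matrix (Fin ν) (Fin ν) ℕ) (ρ : Fin ν → ℤ) :
    Matrix (Fin ν) (Fin ν) ℕ :=
  fun i j => if i = j then ((M i j : ℤ) + ρ i).toNat else M i j

/-- `I` is a monomial ideal. -/
def IsMonomialIdeal {K : Type*} [CommSemiring K] {ν : ℕ}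
    (I : Ideal (MvPolynomial (Fin ν) K)) : Prop :=
  ∀ f ∈ I, ∀ m ∈ f.support, monomial m (1 : K) ∈ I

/-- Borel property of a monomial ideal: if `X^m ∈ I` and `X_j` divides `X^m`, then
`(X_i/X_j)·X^m ∈ I` for all `i ≤ j`. -/
def IsBorelIdeal {K : Type*} [CommSemiring K] {ν : ℕ}
    (I : Ideal (MvPolynomial (Fin ν) K)) : Prop :=
  ∀ m : Fin ν →₀ ℕ, monomial m (1 : K) ∈ I → ∀ i j : Fin ν, i ≤ j → m j ≠ 0 →
    monomial (m + Finsupp.single i 1 - Finsupp.single j 1) (1 : K) ∈ I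


section Stmt0Aux
variable {n : ℕ}

private def extF (f : Fin n → ℕ) : ℕ → ℕ := fun i => if h : i < n then f ⟨i, h⟩ else 0

private def psum (f : Fin n → ℕ) : ℕ → ℕ := fun k => ∑ i ∈ Finset.range k, extF f i

private lemma extF_val (f : Fin n → ℕ) (i : Fin n) : extF f i.val = f i := by
  simp [extF, i.isLt]

private lemma psum_zero (f : Fin n → ℕ) : psum f 0 = 0 := by simp [psum]

private lemma psum_succ (f : Fin n → ℕ) (k : ℕ) : psum f (k+1) = psum f k + extF f k :=
  Finset.sum_range_succ _ _

private lemma psum_mono (f : Fin n → ℕ) : Monotone (psum f) :=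
  monotone_nat_of_le_succ fun k => by rw [psum_succ]; omega

private lemma psum_stab (f : Fin n → ℕ) {k : ℕ} (hk : n ≤ k) : psum f k = ∑ i, f i := by
  have h1 : psum f n = ∑ i, f i := by
    unfold psum
    rw [← Fin.sum_univ_eq_sum_range (extF f) n]
    exact Finset.sum_congr rfl fun i _ => extF_val f i
  rw [← h1]
  unfold psum
  exact (Finset.sum_subset (Finset.range_subset_range.mpr hk) (fun x _ hx => by
    simp only [Finset.mem_range, not_lt] at hx
    simp [extF, Nat.not_lt.mpr hx])).symm

private lemma bridge (f : Fin n → ℕ) (k : ℕ) :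
    psum f k = ∑ i ∈ Finset.univ.filter (fun i : Fin n => (i : ℕ) < k), f i := by
  induction k with
  | zero => simp [psum]
  | succ k ih =>
    rw [psum_succ, ih]
    by_cases hk : k < n
    · have hins : Finset.univ.filter (fun i : Fin n => (i:ℕ) < k+1)
          = insert (⟨k, hk⟩ : Fin n) (Finset.univ.filter (fun i : Fin n => (i:ℕ) < k)) := by
        ext i
        simp [Fin.ext_iff]
        omega
      rw [hins, Finset.sum_insert (by simp)]
      simp [extF, hk]
      omega
    · have heq : Finset.univ.filter (fun i : Fin n => (i:ℕ) < k+1)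
          = Finset.univ.filter (fun i : Fin n => (i:ℕ) < k) := by
        ext i
        have := i.isLt
        simp only [Finset.mem_filter, Finset.mem_univ, true_and]
        omega
      rw [heq]
      simp [extF, hk]

private lemma pairsum_left (g : Fin n → Fin n → ℕ) (k : ℕ) :
    ∑ p ∈ Finset.univ.filter (fun p : Fin n × Fin n => (p.1 : ℕ) < k), g p.1 p.2
      = ∑ i ∈ Finset.univ.filter (fun i : Fin n => (i:ℕ) < k), ∑ j, g i j := by
  rw [Finset.sum_filter, Finset.sum_filter, Fintype.sum_prod_type]
  refine Finset.sum_congr rfl fun i _ => ?_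
  by_cases h : (i:ℕ) < k <;> simp [h]

private lemma pairsum_right (g : Fin n → Fin n → ℕ) (k : ℕ) :
    ∑ p ∈ Finset.univ.filter (fun p : Fin n × Fin n => (p.2 : ℕ) < k), g p.1 p.2
      = ∑ j ∈ Finset.univ.filter (fun j : Fin n => (j:ℕ) < k), ∑ i, g i j := by
  rw [Finset.sum_filter, Finset.sum_filter, Fintype.sum_prod_type, Finset.sum_comm]
  refine Finset.sum_congr rfl fun j _ => ?_
  by_cases h : (j:ℕ) < k <;> simp [h]

end Stmt0Aux

/-- `a ≥_Bor b` iff there is an upper triangular matrix of nonnegative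
integers with row sums `a` and column sums `b`. -/
theorem stmt0 {n d : ℕ} (a b : Fin n → ℕ)
    (ha : ∑ i, a i = d) (hb : ∑ i, b i = d) :
    BorelGE a b ↔ ∃ M : Matrix (Fin n) (Fin n) ℕ, IsTransferMatrix M a b := by
  have hAn : psum a n = d := by rw [psum_stab a le_rfl, ha]
  have hBn : psum b n = d := by rw [psum_stab b le_rfl, hb]
  constructor
  · rintro ⟨α, hα0, hαtop, hα⟩
    have key : ∀ k, (α k : ℤ) = (psum a k : ℤ) - psum b k := by
      intro k
      induction k with
      | zero => simp [hα0, psum_zero]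
      | succ k ih =>
        rcases lt_or_ge k n with hk | hk
        · have h1 := hα ⟨k, hk⟩
          have h2 : psum a (k+1) = psum a k + a ⟨k, hk⟩ := by
            rw [psum_succ]; simp [extF, hk]
          have h3 : psum b (k+1) = psum b k + b ⟨k, hk⟩ := by
            rw [psum_succ]; simp [extF, hk]
          simp only at h1
          omega
        · have h2 : psum a (k+1) = psum a k := by rw [psum_succ]; simp [extF, Nat.not_lt.mpr hk]
          have h3 : psum b (k+1) = psum b k := by rw [psum_succ]; simp [extF, Nat.not_lt.mpr hk]
          rw [hαtop _ hk, hαtop _ (le_trans hk (Nat.le_succ k))] at *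
          omega
    have dom : ∀ k, psum b k ≤ psum a k := by
      intro k; have := key k; omega
    refine ⟨fun i j => min (psum a (i.val+1)) (psum b (j.val+1)) - max (psum a i.val) (psum b j.val), ?_, ?_, ?_⟩
    · intro i j hji
      have h1 : psum b (j.val+1) ≤ psum b i.val := psum_mono b hji
      have h2 := dom i.val
      simp only
      omega
    · intro j
      set J := j.val with hJdef
      have hJ : J < n := j.isLt
      set h : ℕ → ℕ := fun i => min (psum b (J+1)) (max (psum b J) (psum a i)) with hdef
      have hstep : ∀ i : Fin n,
          min (psum a (i.val+1)) (psum b (J+1)) - max (psum a i.val) (psum b J)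
            = h (i.val+1) - h i.val := by
        intro i
        have h1 : psum a i.val ≤ psum a (i.val+1) := psum_mono a (Nat.le_succ _)
        have h2 : psum b J ≤ psum b (J+1) := psum_mono b (Nat.le_succ _)
        simp only [hdef]
        omega
      calc ∑ i, (min (psum a (i.val+1)) (psum b (J+1)) - max (psum a i.val) (psum b J))
          = ∑ i : Fin n, (h (i.val+1) - h i.val) := Finset.sum_congr rfl fun i _ => hstep i
        _ = ∑ i ∈ Finset.range n, (h (i+1) - h i) :=
            Fin.sum_univ_eq_sum_range (fun i => h (i+1) - h i) n
        _ = h n - h 0 := Finset.sum_range_tsub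
            (monotone_nat_of_le_succ fun i => by
              have := psum_succ a i; simp only [hdef]; omega) n
        _ = b j := by
            have h1 : psum b (J+1) ≤ psum b n := psum_mono b hJ
            have h2 : psum b J ≤ psum b (J+1) := psum_mono b (Nat.le_succ _)
            have h3 : psum b (J+1) = psum b J + b j := by
              rw [psum_succ, hJdef, extF_val]
            simp only [hdef, psum_zero]
            omega
    · intro i
      set I := i.val with hIdef
      have hI : I < n := i.isLt
      set g : ℕ → ℕ := fun j => min (psum a (I+1)) (max (psum a I) (psum b j)) with gdef
      have hstep : ∀ j : Fin n,
          min (psum a (I+1)) (psum b (j.val+1)) - max (psum a I) (psum b j.val)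
            = g (j.val+1) - g j.val := by
        intro j
        have h1 : psum b j.val ≤ psum b (j.val+1) := psum_mono b (Nat.le_succ _)
        have h2 : psum a I ≤ psum a (I+1) := psum_mono a (Nat.le_succ _)
        simp only [gdef]
        omega
      calc ∑ j, (min (psum a (I+1)) (psum b (j.val+1)) - max (psum a I) (psum b j.val))
          = ∑ j : Fin n, (g (j.val+1) - g j.val) := Finset.sum_congr rfl fun j _ => hstep j
        _ = ∑ j ∈ Finset.range n, (g (j+1) - g j) :=
            Fin.sum_univ_eq_sum_range (fun j => g (j+1) - g j) n
        _ = g n - g 0 := Finset.sum_range_tsub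
            (monotone_nat_of_le_succ fun j => by
              have := psum_succ b j; simp only [gdef]; omega) n
        _ = a i := by
            have h1 : psum a (I+1) ≤ psum a n := psum_mono a hI
            have h2 : psum a I ≤ psum a (I+1) := psum_mono a (Nat.le_succ _)
            have h3 : psum a (I+1) = psum a I + a i := by
              rw [psum_succ, hIdef, extF_val]
            simp only [gdef, psum_zero]
            omega
  · rintro ⟨M, htri, hcol, hrow⟩
    have dom : ∀ k, psum b k ≤ psum a k := by
      intro k
      rw [bridge a k, bridge b k]
      calc ∑ j ∈ Finset.univ.filter (fun j : Fin n => (j:ℕ) < k), b j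
          = ∑ j ∈ Finset.univ.filter (fun j : Fin n => (j:ℕ) < k), ∑ i, M i j :=
            Finset.sum_congr rfl fun j _ => (hcol j).symm
        _ = ∑ p ∈ Finset.univ.filter (fun p : Fin n × Fin n => (p.2:ℕ) < k), M p.1 p.2 :=
            (pairsum_right M k).symm
        _ = ∑ p ∈ Finset.univ.filter
              (fun p : Fin n × Fin n => (p.2:ℕ) < k ∧ (p.1:ℕ) < k), M p.1 p.2 := by
            refine (Finset.sum_subset ?_ ?_).symm
            · intro p hp
              simp only [Finset.mem_filter, Finset.mem_univ, true_and] at hp ⊢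
              exact hp.1
            · intro p hp hnp
              simp only [Finset.mem_filter, Finset.mem_univ, true_and] at hp hnp
              exact htri p.1 p.2 (by omega)
        _ ≤ ∑ p ∈ Finset.univ.filter (fun p : Fin n × Fin n => (p.1:ℕ) < k), M p.1 p.2 := by
            refine Finset.sum_le_sum_of_subset ?_
            intro p hp
            simp only [Finset.mem_filter, Finset.mem_univ, true_and] at hp ⊢
            exact hp.2
        _ = ∑ i ∈ Finset.univ.filter (fun i : Fin n => (i:ℕ) < k), ∑ j, M i j :=
            pairsum_left M k
        _ = ∑ i ∈ Finset.univ.filter (fun i : Fin n => (i:ℕ) < k), a i :=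
            Finset.sum_congr rfl fun i _ => hrow i
    refine ⟨fun k => psum a k - psum b k, by simp [psum_zero], fun k hk => ?_, fun i => ?_⟩
    · show psum a k - psum b k = 0
      rw [psum_stab a hk, psum_stab b hk, ha, hb, Nat.sub_self]
    · have h1 := dom i.val
      have h2 := dom (i.val + 1)
      have h3 : psum a (i.val+1) = psum a i.val + a i := by rw [psum_succ, extF_val]
      have h4 : psum b (i.val+1) = psum b i.val + b i := by rw [psum_succ, extF_val]
      simp only
      omega

end Fumasoli
end

section
/- Let b, c ∈ ℕ^n_d and ρ ∈ ℤ^n with b + ρ, c + ρ ∈ ℕ^n_d and b_i = c_i for all 1 ≤ i < m(ρ), where m(ρ) = max{i : ρ_i ≠ 0} (or 1 if ρ = 0). Suppose b ≥_Bor c and let M be an upper triangular matrix of nonnegative integers whose column sums are c and whose row sums are b. Then M_{jj} = c_j for all 1 ≤ j ≤ m(ρ). -/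
open MvPolynomial

namespace Fumasoli

/-- if `b ≥_Bor c`, `b_i = c_i` for `i < m(ρ)`, and `M ∈ U(b,c)`, then
`M_{jj} = c_j` for all `j ≤ m(ρ)` (1-indexed). -/
theorem stmt2 {n d : ℕ} (b c : Fin n → ℕ) (ρ : Fin n → ℤ)
    (hb : ∑ i, b i = d) (hc : ∑ i, c i = d)
    (hbρ : ∀ i, 0 ≤ (b i : ℤ) + ρ i) (hbρd : (∑ i, ((b i : ℤ) + ρ i)) = (d : ℤ))
    (hcρ : ∀ i, 0 ≤ (c i : ℤ) + ρ i) (hcρd : (∑ i, ((c i : ℤ) + ρ i)) = (d : ℤ))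
    (heq : ∀ i : Fin n, (i : ℕ) + 1 < mIdx ρ → b i = c i)
    (hBor : BorelGE b c)
    (M : Matrix (Fin n) (Fin n) ℕ) (hM : IsTransferMatrix M b c) :
    ∀ j : Fin n, (j : ℕ) + 1 ≤ mIdx ρ → M j j = c j := by
  obtain ⟨htri, hcol, hrow⟩ := hM
  have key : ∀ m : ℕ, ∀ k : Fin n, (k : ℕ) = m → (k : ℕ) + 1 ≤ mIdx ρ → M k k = c k := by
    intro m
    induction m using Nat.strong_induction_on with
    | _ m IH =>
      intro k hk hkm
      have hzero : ∀ i : Fin n, i ≠ k → M i k = 0 := by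
        intro i hi
        have hvne : (i : ℕ) ≠ (k : ℕ) := fun h => hi (Fin.ext h)
        rcases lt_or_gt_of_ne hvne with hlt | hgt
        · -- i < k
          have hMii : M i i = c i := IH (i : ℕ) (by omega) i rfl (by omega)
          have hbi : b i = c i := heq i (by omega)
          have hrowi := hrow i
          have hsplit : M i i + ∑ j ∈ Finset.univ.erase i, M i j = ∑ j, M i j :=
            Finset.add_sum_erase Finset.univ (M i) (Finset.mem_univ i)
          have herase : ∑ j ∈ Finset.univ.erase i, M i j = 0 := by omega
          have hkmem : k ∈ Finset.univ.erase i :=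
            Finset.mem_erase.mpr ⟨fun h => hi h.symm, Finset.mem_univ k⟩
          exact Finset.sum_eq_zero_iff.mp herase k hkmem
        · exact htri i k hgt
      have := hcol k
      rw [Finset.sum_eq_single k (fun i _ hne => hzero i hne)
        (fun h => absurd (Finset.mem_univ k) h)] at this
      exact this
  intro j hj
  exact key (j : ℕ) j rfl hj

end Fumasoli
end

section
/- Let b, c ∈ ℕ^n_d and ρ ∈ ℤ^n with b + ρ, c + ρ ∈ ℕ^n_d and b_i = c_i for all 1 ≤ i < m(ρ). Let M ∈ ℤ^{n×n}. Define M + ρ to be the matrix obtained from M by adding ρ_i to the diagonal entry M_{ii} for each i. Then M is an upper triangular nonnegative integer matrix with column sums c and row sums b if and only if M + ρ is an upper triangular nonnegative integer matrix with column sums c + ρ and row sums b + ρ. -/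
open MvPolynomial

namespace Fumasoli

lemma le_mIdx {n : ℕ} (ρ : Fin n → ℤ) (i : Fin n) (h : ρ i ≠ 0) :
    (i : ℕ) + 1 ≤ mIdx ρ :=
  le_max_of_le_right (Finset.le_sup (f := fun i : Fin n => (i : ℕ) + 1) (by simp [h]))

lemma mIdx_neg {n : ℕ} (ρ : Fin n → ℤ) : mIdx (-ρ) = mIdx ρ := by
  unfold mIdx; simp

lemma keyDir {n : ℕ} (b c ρ : Fin n → ℤ)
    (hcρ : ∀ i, 0 ≤ c i + ρ i)
    (heq : ∀ i : Fin n, (i : ℕ) + 1 < mIdx ρ → b i = c i)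
    (M : Matrix (Fin n) (Fin n) ℤ) (hM : IsTransferMatrixZ M b c) :
    IsTransferMatrixZ (M + Matrix.diagonal ρ)
      (fun i => b i + ρ i) (fun i => c i + ρ i) := by
  obtain ⟨htri, hpos, hcol, hrow⟩ := hM
  -- block lemma: if `i+1 ≤ m(ρ)`, then `M j l = 0` whenever `j < i ≤ l`.
  have hblock : ∀ i : Fin n, (i : ℕ) + 1 ≤ mIdx ρ →
      ∀ j l : Fin n, (j : ℕ) < (i : ℕ) → (i : ℕ) ≤ (l : ℕ) → M j l = 0 := by
    intro i hi j l hj hl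
    set P := Finset.univ.filter (fun j : Fin n => (j : ℕ) < (i : ℕ)) with hP
    have hmemP : ∀ j : Fin n, j ∈ P ↔ (j : ℕ) < (i : ℕ) := by
      intro j; simp [hP]
    have e1 : ∑ j ∈ P, b j = ∑ j ∈ P, ∑ l ∈ P, M j l + ∑ j ∈ P, ∑ l ∈ Pᶜ, M j l := by
      rw [← Finset.sum_add_distrib]
      refine Finset.sum_congr rfl fun j _ => ?_
      rw [← hrow j, Finset.sum_add_sum_compl]
    have e2 : ∑ j ∈ P, c j = ∑ j ∈ P, ∑ l ∈ P, M j l := by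
      rw [show ∑ j ∈ P, ∑ l ∈ P, M j l = ∑ l ∈ P, ∑ j ∈ P, M j l from Finset.sum_comm]
      refine Finset.sum_congr rfl fun j hj => ?_
      rw [← hcol j, ← Finset.sum_add_sum_compl P (fun l => M l j), add_eq_left]
      refine Finset.sum_eq_zero fun l hl => ?_
      apply htri
      have h1 : (j : ℕ) < (i : ℕ) := (hmemP j).1 hj
      have h2 : ¬ (l : ℕ) < (i : ℕ) := by
        simpa [hmemP] using (Finset.mem_compl.1 hl)
      omega
    have ebc : ∑ j ∈ P, b j = ∑ j ∈ P, c j := by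
      refine Finset.sum_congr rfl fun j hj => ?_
      have h1 : (j : ℕ) < (i : ℕ) := (hmemP j).1 hj
      exact heq j (by omega)
    have hz : ∑ j ∈ P, ∑ l ∈ Pᶜ, M j l = 0 := by
      rw [e2] at ebc; rw [e1] at ebc; linarith
    have hz' := (Finset.sum_eq_zero_iff_of_nonneg
      (fun j _ => Finset.sum_nonneg fun l _ => hpos j l)).1 hz
    have hz'' := (Finset.sum_eq_zero_iff_of_nonneg
      (fun l _ => hpos j l)).1 (hz' j ((hmemP j).2 hj))
    refine hz'' l ?_
    simp only [Finset.mem_compl, hmemP, not_lt]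
    omega
  -- nonnegativity of shifted diagonal entries
  have hdiag : ∀ i, 0 ≤ M i i + ρ i := by
    intro i
    by_cases h : ρ i = 0
    · simpa [h] using hpos i i
    · have hi := le_mIdx ρ i h
      have hsum : ∑ l : Fin n, M l i = M i i := by
        refine Finset.sum_eq_single i (fun l _ hne => ?_)
          (fun h => absurd (Finset.mem_univ i) h)
        rcases lt_or_gt_of_ne (fun hv => hne (Fin.ext hv) : (l : ℕ) ≠ (i : ℕ)) with hlt | hgt
        · exact hblock i hi l i hlt le_rfl
        · exact htri l i hgt
      have hMii : M i i = c i := by rw [← hsum, hcol i]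
      rw [hMii]; exact hcρ i
  refine ⟨?_, ?_, ?_, ?_⟩
  · intro i j hlt
    have hne : i ≠ j := fun hv => by omega
    simp [Matrix.add_apply, Matrix.diagonal_apply_ne _ hne, htri i j hlt]
  · intro i j
    by_cases hij : i = j
    · subst hij
      have : (M + Matrix.diagonal ρ) i i = M i i + ρ i := by
        simp [Matrix.add_apply]
      rw [this]; exact hdiag i
    · simpa [Matrix.add_apply, Matrix.diagonal_apply_ne _ hij] using hpos i j
  · intro j
    simp only [Matrix.add_apply, Finset.sum_add_distrib, hcol j]
    congr 1
    simp [Matrix.diagonal_apply]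
  · intro i
    simp only [Matrix.add_apply, Finset.sum_add_distrib, hrow i]
    congr 1
    simp [Matrix.diagonal_apply]

/-- `M ∈ U(b,c)` iff `M + ρ ∈ U(b+ρ, c+ρ)`, where `M + ρ` adds `ρ` along
the diagonal. -/
theorem stmt3 {n d : ℕ} (b c : Fin n → ℕ) (ρ : Fin n → ℤ)
    (hb : ∑ i, b i = d) (hc : ∑ i, c i = d)
    (hbρ : ∀ i, 0 ≤ (b i : ℤ) + ρ i) (hbρd : (∑ i, ((b i : ℤ) + ρ i)) = (d : ℤ))
    (hcρ : ∀ i, 0 ≤ (c i : ℤ) + ρ i) (hcρd : (∑ i, ((c i : ℤ) + ρ i)) = (d : ℤ))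
    (heq : ∀ i : Fin n, (i : ℕ) + 1 < mIdx ρ → b i = c i)
    (M : Matrix (Fin n) (Fin n) ℤ) :
    IsTransferMatrixZ M (fun i => (b i : ℤ)) (fun i => (c i : ℤ)) ↔
      IsTransferMatrixZ (M + Matrix.diagonal ρ)
        (fun i => (b i : ℤ) + ρ i) (fun i => (c i : ℤ) + ρ i) := by
  constructor
  · intro hM
    exact keyDir _ _ ρ hcρ (fun i hi => by exact_mod_cast heq i hi) M hM
  · intro hM
    have h2 := keyDir (fun i => (b i : ℤ) + ρ i) (fun i => (c i : ℤ) + ρ i) (-ρ)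
      (fun i => by simp) (fun i hi => by
        have := heq i (by rwa [mIdx_neg] at hi); rw [this])
      (M + Matrix.diagonal ρ) hM
    have hmat : M + Matrix.diagonal ρ + Matrix.diagonal (-ρ) = M := by
      ext i j
      by_cases h : i = j <;> simp [Matrix.add_apply, Matrix.diagonal_apply, h]
    rw [hmat] at h2
    simpa using h2

end Fumasoli
end

section
/- Let K be a field, S = K[X_1,…,X_n], and let φ : S → S be the K-algebra homomorphism with φ(X_j) = Σ_{i=1}^j Y_{ij} X_i where the Y_{ij} are taken as indeterminate coefficients (i.e., work over T = K[Y_{ij} : 1 ≤ i ≤ j ≤ n] and φ : T[X] → T[X]). For b ∈ ℕ^n_d, write φ(X^b) = Σ_{a ∈ ℕ^n_d} α^b_a X^a. Then α^b_a = Σ_{M ∈ U(a,b)} μ_M Y^M, where U(a,b) is the set of upper triangular nonnegative integer n×n matrices with column sums b and row sums a, Y^M = Π_{i≤j} Y_{ij}^{M_{ij}}, and μ_M = Π_{j=1}^n multinomial(Σ_i M_{ij}; M_{1j},…,M_{nj}). In particular α^b_a ≠ 0 if and only if a ≥_Bor b. -/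
open MvPolynomial

namespace Fumasoli

lemma transfer_to_borel {n : ℕ} {M : Matrix (Fin n) (Fin n) ℕ} {a b : Fin n → ℕ}
    (hd : ∑ i, a i = ∑ i, b i) (hM : IsTransferMatrix M a b) : BorelGE a b := by
  obtain ⟨htri, hcol, hrow⟩ := hM
  set F : ℕ → Finset (Fin n) := fun k => Finset.univ.filter (fun i : Fin n => i.val < k) with hF
  set A : ℕ → ℕ := fun k => ∑ i ∈ F k, a i with hA
  set B : ℕ → ℕ := fun k => ∑ j ∈ F k, b j with hB
  have hBA : ∀ k, B k ≤ A k := by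
    intro k
    have h1 : B k = ∑ j ∈ F k, ∑ i ∈ F k, M i j := by
      apply Finset.sum_congr rfl
      intro j hj
      rw [← hcol j]
      refine (Finset.sum_subset (Finset.subset_univ _) ?_).symm
      intro i _ hi
      simp only [hF, Finset.mem_filter, Finset.mem_univ, true_and, not_lt] at hi hj
      exact htri i j (lt_of_lt_of_le hj hi)
    rw [h1, Finset.sum_comm]
    apply Finset.sum_le_sum
    intro i _
    rw [← hrow i]
    exact Finset.sum_le_sum_of_subset (Finset.subset_univ _)
  have hstep : ∀ i : Fin n, A (i.val + 1) = A i.val + a i ∧ B (i.val + 1) = B i.val + b i := by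
    intro i
    have hins : F (i.val + 1) = insert i (F i.val) := by
      ext j
      simp only [hF, Finset.mem_filter, Finset.mem_univ, true_and, Finset.mem_insert]
      constructor
      · intro h
        rcases Nat.lt_or_ge j.val i.val with h' | h'
        · exact Or.inr h'
        · exact Or.inl (Fin.ext (by omega))
      · rintro (rfl | h) <;> omega
    have hnotmem : i ∉ F i.val := by simp [hF]
    constructor <;> · simp only [hA, hB]; rw [hins, Finset.sum_insert hnotmem]; ring
  refine ⟨fun k => A k - B k, ?_, ?_, ?_⟩
  · simp [hA, hB, hF, Finset.filter_false_of_mem]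
  · intro j hj
    have huniv : F j = Finset.univ := by
      ext i; simp only [hF, Finset.mem_filter, Finset.mem_univ, true_and]
      exact ⟨fun _ => trivial, fun _ => lt_of_lt_of_le i.isLt hj⟩
    simp only [hA, hB, huniv, hd]
    omega
  · intro i
    obtain ⟨h1, h2⟩ := hstep i
    rw [Nat.cast_sub (hBA _), Nat.cast_sub (hBA _)]
    push_cast
    have := hBA i.val
    push_cast [h1, h2]
    ring



lemma sum_one_update {n : ℕ} {f g : Fin n → ℕ} (i₀ : Fin n) {v : ℕ} (hv : g i₀ = v)
    (h : ∀ i, i ≠ i₀ → g i = f i) : (∑ i, g i) + f i₀ = (∑ i, f i) + v := by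
  rw [← Finset.add_sum_erase _ g (Finset.mem_univ i₀),
      ← Finset.add_sum_erase _ f (Finset.mem_univ i₀),
      Finset.sum_congr rfl (fun i hi => h i (Finset.ne_of_mem_erase hi)), hv]
  ring

lemma sum_two_update {n : ℕ} {f g : Fin n → ℕ} (i₁ i₂ : Fin n) (h12 : i₁ ≠ i₂) {v₁ v₂ : ℕ}
    (hv₁ : g i₁ = v₁) (hv₂ : g i₂ = v₂)
    (h : ∀ i, i ≠ i₁ → i ≠ i₂ → g i = f i) :
    (∑ i, g i) + f i₁ + f i₂ = (∑ i, f i) + v₁ + v₂ := by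
  have h2 : i₂ ∈ Finset.univ.erase i₁ := Finset.mem_erase.mpr ⟨Ne.symm h12, Finset.mem_univ _⟩
  rw [← Finset.add_sum_erase _ g (Finset.mem_univ i₁), ← Finset.add_sum_erase _ g h2,
      ← Finset.add_sum_erase _ f (Finset.mem_univ i₁), ← Finset.add_sum_erase _ f h2,
      Finset.sum_congr rfl (fun i hi => h i (Finset.ne_of_mem_erase (Finset.mem_of_mem_erase hi))
        (Finset.ne_of_mem_erase hi)), hv₁, hv₂]
  ring


lemma borel_to_transfer_aux {n : ℕ} : ∀ (N : ℕ) (a b : Fin n → ℕ) (α : ℕ → ℕ),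
    (∑ k ∈ Finset.range (n + 1), α k) = N → α 0 = 0 → (∀ j, n ≤ j → α j = 0) →
    (∀ i : Fin n, (a i : ℤ) - (b i : ℤ) = (α (i.val + 1) : ℤ) - (α i.val : ℤ)) →
    ∃ M, IsTransferMatrix M a b := by
  intro N
  induction N using Nat.strong_induction_on with
  | _ N ih =>
    intro a b α hsum h0 htop hdiff
    rcases Nat.eq_zero_or_pos N with rfl | hN
    · have hz : ∀ k, α k = 0 := by
        intro k
        rcases Nat.lt_or_ge k (n+1) with h | h
        · exact Finset.sum_eq_zero_iff.mp hsum k (Finset.mem_range.mpr h)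
        · exact htop k (by omega)
      have hab : a = b := by
        funext i
        have := hdiff i
        simp [hz] at this
        omega
      subst hab
      refine ⟨fun i j => if i = j then a i else 0, ?_, ?_, ?_⟩
      · intro i j h
        have : i ≠ j := by intro h'; subst h'; omega
        simp [this]
      · intro j
        rw [Finset.sum_eq_single j]
        · simp
        · intro i _ hij; simp [hij]
        · simp
      · intro i
        rw [Finset.sum_eq_single i]
        · simp
        · intro j _ hij; simp [Ne.symm hij]
        · simp
    · obtain ⟨m, hmmem, hmmax⟩ : ∃ m, m ∈ (Finset.range (n+1)).filter (fun k => α k ≠ 0) ∧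
          ∀ k ∈ (Finset.range (n+1)).filter (fun k => α k ≠ 0), k ≤ m := by
        have hne : ((Finset.range (n+1)).filter (fun k => α k ≠ 0)).Nonempty := by
          by_contra h
          rw [Finset.not_nonempty_iff_eq_empty] at h
          have hz : ∑ k ∈ Finset.range (n+1), α k = 0 := by
            apply Finset.sum_eq_zero
            intro k hk
            by_contra hk'
            have : k ∈ (Finset.range (n+1)).filter (fun k => α k ≠ 0) :=
              Finset.mem_filter.mpr ⟨hk, hk'⟩
            rw [h] at this
            exact absurd this (Finset.notMem_empty k)
          omega
        exact ⟨_, Finset.max'_mem _ hne, fun k hk => Finset.le_max' _ _ hk⟩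
      rw [Finset.mem_filter, Finset.mem_range] at hmmem
      obtain ⟨hmlt, hmne⟩ := hmmem
      have hm0 : m ≠ 0 := fun h => hmne (h ▸ h0)
      have hmn : m ≠ n := fun h => hmne (h ▸ htop n le_rfl)
      have hmax : α (m + 1) = 0 := by
        rcases Nat.lt_or_ge (m+1) (n+1) with h | h
        · by_contra h'
          have : m + 1 ≤ m := hmmax _ (Finset.mem_filter.mpr ⟨Finset.mem_range.mpr h, h'⟩)
          omega
        · exact htop _ (by omega)
      have hmltn : m < n := by omega
      have hαm1 : 1 ≤ α m := Nat.one_le_iff_ne_zero.mpr hmne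
      obtain ⟨i₂, hi₂v⟩ : ∃ i₂ : Fin n, (i₂ : ℕ) = m := ⟨⟨m, hmltn⟩, rfl⟩
      obtain ⟨i₁, hi₁v⟩ : ∃ i₁ : Fin n, (i₁ : ℕ) = m - 1 := ⟨⟨m - 1, by omega⟩, rfl⟩
      have hi12 : i₁ ≠ i₂ := by
        intro h
        rw [h, hi₂v] at hi₁v
        omega
      have hbm1 : 1 ≤ b i₂ := by
        have h := hdiff i₂
        rw [hi₂v, hmax] at h
        have : (0:ℤ) < α m := by exact_mod_cast hαm1
        omega
      set b' : Fin n → ℕ := fun i => if i = i₁ then b i + 1 else if i = i₂ then b i - 1 else b i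
        with hb'
      set α' : ℕ → ℕ := fun k => if k = m then α k - 1 else α k with hα'
      have hsum' : ∑ k ∈ Finset.range (n+1), α' k = N - 1 := by
        have hmr : m ∈ Finset.range (n+1) := Finset.mem_range.mpr hmlt
        rw [← Finset.add_sum_erase _ _ hmr] at hsum
        rw [← Finset.add_sum_erase _ _ hmr]
        have he : ∑ k ∈ (Finset.range (n+1)).erase m, α' k
            = ∑ k ∈ (Finset.range (n+1)).erase m, α k :=
          Finset.sum_congr rfl (fun k hk => by simp [hα', Finset.ne_of_mem_erase hk])
        rw [he]
        simp only [hα', if_pos rfl]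
        omega
      obtain ⟨M', hM'tri, hM'col, hM'row⟩ :=
        ih (N - 1) (by omega) a b' α' hsum' (by simp [hα', Ne.symm hm0, h0])
          (fun j hj => by
            have : j ≠ m := by omega
            simp [hα', this, htop j hj])
          (by
            intro i
            simp only [hb', hα']
            rcases eq_or_ne i₁ i with rfl | h1
            · have h := hdiff i₁
              rw [hi₁v, Nat.sub_add_cancel (by omega : 1 ≤ m)] at h
              rw [if_pos rfl, hi₁v, Nat.sub_add_cancel (by omega : 1 ≤ m),
                if_pos rfl, if_neg (by omega : m - 1 ≠ m)]
              omega
            · rw [if_neg (Ne.symm h1)]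
              rcases eq_or_ne i₂ i with rfl | h2
              · have h := hdiff i₂
                rw [hi₂v, hmax] at h
                rw [if_pos rfl, hi₂v, if_neg (by omega : m + 1 ≠ m), if_pos rfl, hmax]
                omega
              · rw [if_neg (Ne.symm h2)]
                have hv1 : (i : ℕ) ≠ m := fun hh => h2 (Fin.ext (by omega)).symm
                have hv2 : (i : ℕ) + 1 ≠ m := fun hh => h1 (Fin.ext (by omega)).symm
                rw [if_neg hv2, if_neg hv1]
                exact hdiff i)
      have hcolpos : ∑ i, M' i i₁ ≠ 0 := by
        rw [hM'col i₁]
        simp [hb']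
      obtain ⟨i₀, -, hi₀⟩ := Finset.exists_ne_zero_of_sum_ne_zero hcolpos
      have hi₀1 : 1 ≤ M' i₀ i₁ := Nat.one_le_iff_ne_zero.mpr hi₀
      have hi₀le : (i₀ : ℕ) ≤ (i₁ : ℕ) := by
        by_contra h
        exact hi₀ (hM'tri i₀ i₁ (by omega))
      refine ⟨fun i j => if i = i₀ ∧ j = i₁ then M' i j - 1
        else if i = i₀ ∧ j = i₂ then M' i j + 1 else M' i j, ?_, ?_, ?_⟩
      · intro i j h
        rcases eq_or_ne i₁ j with rfl | hj1
        · rcases eq_or_ne i₀ i with rfl | hi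
          · exfalso; omega
          · simp only [Ne.symm hi, false_and, if_false]
            exact hM'tri _ _ h
        · rcases eq_or_ne i₂ j with rfl | hj2
          · rcases eq_or_ne i₀ i with rfl | hi
            · exfalso; omega
            · simp only [Ne.symm hi, false_and, if_false]
              exact hM'tri _ _ h
          · simp only [Ne.symm hj1, Ne.symm hj2, and_false, if_false]
            exact hM'tri _ _ h
      · intro j
        rcases eq_or_ne i₁ j with rfl | hj1
        · have key := sum_one_update (f := fun i => M' i i₁)
            (g := fun i => if i = i₀ ∧ i₁ = i₁ then M' i i₁ - 1
              else if i = i₀ ∧ i₁ = i₂ then M' i i₁ + 1 else M' i i₁) i₀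
            (v := M' i₀ i₁ - 1) (by simp) (fun i hi => by simp [hi])
          beta_reduce
          beta_reduce at key
          rw [hM'col i₁] at key
          have hb'1 : b' i₁ = b i₁ + 1 := by simp [hb']
          rw [hb'1] at key
          omega
        · rcases eq_or_ne i₂ j with rfl | hj2
          · have key := sum_one_update (f := fun i => M' i i₂)
              (g := fun i => if i = i₀ ∧ i₂ = i₁ then M' i i₂ - 1
                else if i = i₀ ∧ i₂ = i₂ then M' i i₂ + 1 else M' i i₂) i₀
              (v := M' i₀ i₂ + 1) (by simp [Ne.symm hi12]) (fun i hi => by simp [hi])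
            beta_reduce
            beta_reduce at key
            rw [hM'col i₂] at key
            have hb'2 : b' i₂ = b i₂ - 1 := by simp [hb', Ne.symm hi12]
            rw [hb'2] at key
            omega
          · rw [Finset.sum_congr rfl (fun i _ => by
              simp only [Ne.symm hj1, Ne.symm hj2, and_false, if_false] : ∀ i ∈ Finset.univ,
                (if i = i₀ ∧ j = i₁ then M' i j - 1
                  else if i = i₀ ∧ j = i₂ then M' i j + 1 else M' i j) = M' i j)]
            rw [hM'col j]
            simp [hb', Ne.symm hj1, Ne.symm hj2]
      · intro i
        rcases eq_or_ne i₀ i with rfl | hi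
        · have key := sum_two_update (f := fun j => M' i₀ j)
            (g := fun j => if i₀ = i₀ ∧ j = i₁ then M' i₀ j - 1
              else if i₀ = i₀ ∧ j = i₂ then M' i₀ j + 1 else M' i₀ j)
            i₁ i₂ hi12 (v₁ := M' i₀ i₁ - 1) (v₂ := M' i₀ i₂ + 1)
            (by simp) (by simp [Ne.symm hi12]) (fun j h1 h2 => by simp [h1, h2])
          beta_reduce
          beta_reduce at key
          rw [hM'row i₀] at key
          omega
        · rw [Finset.sum_congr rfl (fun j _ => by
            simp only [Ne.symm hi, false_and, if_false] : ∀ j ∈ Finset.univ,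
              (if i = i₀ ∧ j = i₁ then M' i j - 1
                else if i = i₀ ∧ j = i₂ then M' i j + 1 else M' i j) = M' i j)]
          exact hM'row i

-- extension of multinomial by zeros
lemma multinomial_extend {ν : ℕ} (s : Finset (Fin ν)) (k : Fin ν → ℕ)
    (hk : ∀ i, k i ≠ 0 → i ∈ s) :
    Nat.multinomial s k = Nat.multinomial Finset.univ k := by
  rw [Nat.multinomial, Nat.multinomial]
  have hs : ∑ i ∈ s, k i = ∑ i, k i :=
    Finset.sum_subset (Finset.subset_univ s) (fun i _ hi => by
      by_contra h; exact hi (hk i h))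
  have hp : ∏ i ∈ s, Nat.factorial (k i) = ∏ i, Nat.factorial (k i) :=
    Finset.prod_subset (Finset.subset_univ s) (fun i _ hi => by
      have : k i = 0 := by by_contra h; exact hi (hk i h)
      simp [this])
  rw [hs, hp]

-- the finset of column configurations
noncomputable def colFinset (n : ℕ) (a b : Fin n → ℕ) : Finset (Fin n → Fin n → ℕ) :=
  (Fintype.piFinset fun j => Finset.piAntidiag (Finset.univ.filter fun i => i ≤ j) (b j)).filter
    (fun N => ∀ i, ∑ j, N j i = a i)


section Expand
variable {K : Type*} [CommSemiring K] {n : ℕ}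

lemma expand_coeff (a b : Fin n → ℕ) :
    MvPolynomial.coeff (expF a)
      ((aeval fun j : Fin n =>
          ∑ i ∈ Finset.univ.filter (fun i : Fin n => i ≤ j),
            (C (X (i, j) : MvPolynomial (Fin n × Fin n) K) *
              X i : MvPolynomial (Fin n) (MvPolynomial (Fin n × Fin n) K)))
        (mono (MvPolynomial (Fin n × Fin n) K) b)) =
    ∑ N ∈ colFinset n a b,
      (∏ j, Nat.multinomial Finset.univ (fun i => N j i) : MvPolynomial (Fin n × Fin n) K) *
        ∏ j, ∏ i, (X (i, j) : MvPolynomial (Fin n × Fin n) K) ^ N j i := by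
  classical
  set T := MvPolynomial (Fin n × Fin n) K with hT
  set s : Fin n → Finset (Fin n) := fun j => Finset.univ.filter (fun i : Fin n => i ≤ j) with hs
  have h0 : (aeval fun j : Fin n => ∑ i ∈ s j, (C (X (i,j) : T) * X i)) (mono T b)
      = ∏ j, (∑ i ∈ s j, (C (X (i,j) : T) * X i)) ^ b j := by
    rw [mono, aeval_monomial]
    simp [Finsupp.prod_pow, expF]
  rw [h0]
  have h1 : ∀ j : Fin n, (∑ i ∈ s j, (C (X (i,j):T) * X i)) ^ b j
      = ∑ k ∈ Finset.piAntidiag (s j) (b j),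
          (Nat.multinomial (s j) k : MvPolynomial (Fin n) T) *
            ∏ i ∈ s j, (C (X (i,j):T) * X i) ^ k i :=
    fun j => Finset.sum_pow_eq_sum_piAntidiag (s j) _ (b j)
  rw [Finset.prod_congr rfl (fun j _ => h1 j), Finset.prod_univ_sum]
  have h2 : ∀ N ∈ Fintype.piFinset (fun j => Finset.piAntidiag (s j) (b j)),
      (∏ j, ((Nat.multinomial (s j) (N j) : MvPolynomial (Fin n) T) *
          ∏ i ∈ s j, (C (X (i,j):T) * X i) ^ N j i))
      = monomial (expF (fun i => ∑ j, N j i))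
          ((∏ j, (Nat.multinomial Finset.univ (fun i => N j i) : T)) *
            ∏ j, ∏ i, (X (i,j):T) ^ N j i) := by
    intro N hN
    rw [Fintype.mem_piFinset] at hN
    have hsupp : ∀ j i, N j i ≠ 0 → i ∈ s j :=
      fun j i h => (Finset.mem_piAntidiag.mp (hN j)).2 i h
    have hP : ∀ j, (∏ i ∈ s j, (C (X (i,j):T) * X i) ^ N j i)
        = C (∏ i, (X (i,j):T) ^ N j i) * ∏ i, (X i : MvPolynomial (Fin n) T) ^ N j i := by
      intro j
      rw [Finset.prod_congr rfl (fun i (_ : i ∈ s j) => mul_pow (C (X (i,j):T)) (X i) (N j i)),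
        Finset.prod_mul_distrib]
      congr 1
      · rw [Finset.prod_congr rfl
          (fun i (_ : i ∈ s j) => (map_pow C (X (i,j) : T) (N j i)).symm), ← map_prod]
        congr 1
        refine Finset.prod_subset (Finset.subset_univ _) ?_
        intro i _ hi
        have : N j i = 0 := by by_contra h; exact hi (hsupp j i h)
        simp [this]
      · refine Finset.prod_subset (Finset.subset_univ _) ?_
        intro i _ hi
        have : N j i = 0 := by by_contra h; exact hi (hsupp j i h)
        simp [this]
    have hc : ∀ j, (Nat.multinomial (s j) (N j) : MvPolynomial (Fin n) T)
        = C ((Nat.multinomial Finset.univ (fun i => N j i) : T)) := by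
      intro j
      rw [multinomial_extend (s j) (N j) (hsupp j), map_natCast]
    have hXX : (∏ j, ∏ i, (X i : MvPolynomial (Fin n) T) ^ N j i)
        = ∏ i, (X i : MvPolynomial (Fin n) T) ^ (∑ j, N j i) := by
      rw [Finset.prod_comm]
      exact Finset.prod_congr rfl (fun i _ => Finset.prod_pow_eq_pow_sum _ _ _)
    have hmono : (monomial (expF (fun i => ∑ j, N j i))
          ((∏ j, (Nat.multinomial Finset.univ (fun i => N j i) : T)) *
            ∏ j, ∏ i, (X (i,j):T) ^ N j i) : MvPolynomial (Fin n) T)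
        = C ((∏ j, (Nat.multinomial Finset.univ (fun i => N j i) : T)) *
            ∏ j, ∏ i, (X (i,j):T) ^ N j i) *
          ∏ i, (X i : MvPolynomial (Fin n) T) ^ (∑ j, N j i) := by
      rw [monomial_eq]
      simp [Finsupp.prod_pow, expF]
    rw [Finset.prod_congr rfl (fun j (_ : j ∈ Finset.univ) => by rw [hP j, hc j]), hmono,
      Finset.prod_mul_distrib, Finset.prod_mul_distrib, ← map_prod, ← map_prod, hXX, map_mul]
    ring
  rw [Finset.sum_congr rfl h2, coeff_sum]
  have h3 : ∀ N : Fin n → Fin n → ℕ,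
      MvPolynomial.coeff (expF a) (monomial (expF (fun i => ∑ j, N j i))
        ((∏ j, (Nat.multinomial Finset.univ (fun i => N j i) : T)) *
          ∏ j, ∏ i, (X (i,j):T) ^ N j i))
      = if (∀ i, ∑ j, N j i = a i) then
          ((∏ j, (Nat.multinomial Finset.univ (fun i => N j i) : T)) *
            ∏ j, ∏ i, (X (i,j):T) ^ N j i) else 0 := by
    intro N
    have hiff : (expF (fun i => ∑ j, N j i) = expF a) ↔ (∀ i, ∑ j, N j i = a i) := by
      rw [expF, expF, Equiv.apply_eq_iff_eq, funext_iff]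
    rw [coeff_monomial, if_congr hiff rfl rfl]
  rw [Finset.sum_congr rfl (fun N _ => h3 N), ← Finset.sum_filter]
  rfl

end Expand


section Bridge
variable {n : ℕ}

lemma mem_TF_iff (a b : Fin n → ℕ) (M : Matrix (Fin n) (Fin n) ℕ) :
    M ∈ (colFinset n a b).image
        (fun N => (fun i j => N j i : Matrix (Fin n) (Fin n) ℕ)) ↔
      IsTransferMatrix M a b := by
  refine (Finset.mem_image (f := fun N : Fin n → Fin n → ℕ => (fun i j => N j i : Matrix (Fin n) (Fin n) ℕ))).trans ?_
  constructor
  · rintro ⟨N, hN, rfl⟩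
    rw [colFinset, Finset.mem_filter, Fintype.mem_piFinset] at hN
    obtain ⟨h1, h2⟩ := hN
    refine ⟨?_, ?_, h2⟩
    · intro i j hji
      by_contra h
      have hmem := (Finset.mem_piAntidiag.mp (h1 j)).2 i h
      rw [Finset.mem_filter] at hmem
      have : (i : ℕ) ≤ (j : ℕ) := hmem.2
      omega
    · intro j
      have hsum := (Finset.mem_piAntidiag.mp (h1 j)).1
      rw [← hsum]
      refine (Finset.sum_subset (Finset.subset_univ _) ?_).symm
      intro i _ hi
      rw [Finset.mem_filter] at hi
      have hle : ¬ ((i:ℕ) ≤ (j:ℕ)) := fun hh => hi ⟨Finset.mem_univ i, Fin.le_def.mpr hh⟩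
      by_contra h
      have hmem := (Finset.mem_piAntidiag.mp (h1 j)).2 i h
      rw [Finset.mem_filter, Fin.le_def] at hmem
      omega
  · rintro ⟨htri, hcol, hrow⟩
    refine ⟨fun j i => M i j, ?_, rfl⟩
    rw [colFinset, Finset.mem_filter, Fintype.mem_piFinset]
    constructor
    · intro j
      rw [Finset.mem_piAntidiag]
      constructor
      · rw [Finset.sum_subset (Finset.subset_univ _) (fun i _ hi => by
          rw [Finset.mem_filter] at hi
          have : ¬ (i ≤ j) := fun hh => hi ⟨Finset.mem_univ i, hh⟩
          exact htri i j (by rw [Fin.le_def] at this; omega))]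
        exact hcol j
      · intro i hi
        rw [Finset.mem_filter]
        refine ⟨Finset.mem_univ i, ?_⟩
        by_contra hh
        rw [Fin.le_def] at hh
        exact hi (htri i j (by omega))
    · exact hrow

end Bridge


section Final
variable {K : Type*} [Field K] [CharZero K] {n : ℕ}

lemma transfer_term_eq (M : Matrix (Fin n) (Fin n) ℕ) :
    (muM M : MvPolynomial (Fin n × Fin n) K) *
        ∏ i, ∏ j, (X (i, j) : MvPolynomial (Fin n × Fin n) K) ^ M i j
      = monomial (Finsupp.equivFunOnFinite.symm (fun p : Fin n × Fin n => M p.1 p.2))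
          ((muM M : K)) := by
  rw [monomial_eq, Finsupp.prod_pow]
  congr 1
  exact (Fintype.prod_prod_type
    (f := fun p : Fin n × Fin n => (X p : MvPolynomial (Fin n × Fin n) K) ^
      (Finsupp.equivFunOnFinite.symm (fun q : Fin n × Fin n => M q.1 q.2)) p)).symm

lemma muM_pos (M : Matrix (Fin n) (Fin n) ℕ) : 0 < muM M :=
  Finset.prod_pos (fun j _ => Nat.multinomial_pos _ _)

theorem stmt4' (a b : Fin n → ℕ) (hd : ∑ i, a i = ∑ i, b i) :
    MvPolynomial.coeff (expF a)
      ((aeval fun j : Fin n =>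
          ∑ i ∈ Finset.univ.filter (fun i : Fin n => i ≤ j),
            (C (X (i, j) : MvPolynomial (Fin n × Fin n) K) *
              X i : MvPolynomial (Fin n) (MvPolynomial (Fin n × Fin n) K)))
        (mono (MvPolynomial (Fin n × Fin n) K) b)) =
      (∑ᶠ M ∈ {M : Matrix (Fin n) (Fin n) ℕ | IsTransferMatrix M a b},
        (muM M : MvPolynomial (Fin n × Fin n) K) *
          ∏ i, ∏ j, (X (i, j) : MvPolynomial (Fin n × Fin n) K) ^ M i j) ∧
    (MvPolynomial.coeff (expF a)
      ((aeval fun j : Fin n =>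
          ∑ i ∈ Finset.univ.filter (fun i : Fin n => i ≤ j),
            (C (X (i, j) : MvPolynomial (Fin n × Fin n) K) *
              X i : MvPolynomial (Fin n) (MvPolynomial (Fin n × Fin n) K)))
        (mono (MvPolynomial (Fin n × Fin n) K) b)) ≠ 0 ↔ BorelGE a b) := by
  classical
  set tr : (Fin n → Fin n → ℕ) → Matrix (Fin n) (Fin n) ℕ :=
    fun N => (fun i j => N j i) with htr
  set TF : Finset (Matrix (Fin n) (Fin n) ℕ) := (colFinset n a b).image tr with hTF
  have hsetTF : {M : Matrix (Fin n) (Fin n) ℕ | IsTransferMatrix M a b} = ↑TF := by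
    ext M
    rw [Set.mem_setOf_eq, hTF, Finset.mem_coe]; exact (mem_TF_iff a b M).symm
  have htrinj : Function.Injective tr := by
    intro N1 N2 h
    funext j i
    exact congrFun (congrFun h i) j
  have hcoeff : MvPolynomial.coeff (expF a)
      ((aeval fun j : Fin n =>
          ∑ i ∈ Finset.univ.filter (fun i : Fin n => i ≤ j),
            (C (X (i, j) : MvPolynomial (Fin n × Fin n) K) *
              X i : MvPolynomial (Fin n) (MvPolynomial (Fin n × Fin n) K)))
        (mono (MvPolynomial (Fin n × Fin n) K) b))
      = ∑ M ∈ TF, (muM M : MvPolynomial (Fin n × Fin n) K) *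
          ∏ i, ∏ j, (X (i, j) : MvPolynomial (Fin n × Fin n) K) ^ M i j := by
    rw [expand_coeff, hTF, Finset.sum_image (fun N1 _ N2 _ h => htrinj h)]
    refine Finset.sum_congr rfl (fun N _ => ?_)
    congr 1
    · rw [muM, Nat.cast_prod]
    · rw [Finset.prod_comm]
  have heq1 : (∑ᶠ M ∈ {M : Matrix (Fin n) (Fin n) ℕ | IsTransferMatrix M a b},
        (muM M : MvPolynomial (Fin n × Fin n) K) *
          ∏ i, ∏ j, (X (i, j) : MvPolynomial (Fin n × Fin n) K) ^ M i j)
      = ∑ M ∈ TF, (muM M : MvPolynomial (Fin n × Fin n) K) *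
          ∏ i, ∏ j, (X (i, j) : MvPolynomial (Fin n × Fin n) K) ^ M i j := by
    rw [hsetTF, finsum_mem_coe_finset]
  refine ⟨by rw [hcoeff, heq1], ?_⟩
  rw [hcoeff]
  rcases TF.eq_empty_or_nonempty with hemp | ⟨M₀, hM₀⟩
  · rw [hemp, Finset.sum_empty]
    constructor
    · intro h; exact absurd rfl h
    · intro hB h0
      obtain ⟨α, hα0, hαtop, hαd⟩ := hB
      obtain ⟨M, hM⟩ := borel_to_transfer_aux (∑ k ∈ Finset.range (n+1), α k) a b α rfl hα0 hαtop hαd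
      have : M ∈ TF := (mem_TF_iff a b M).mpr hM
      rw [hemp] at this
      exact absurd this (Finset.notMem_empty M)
  · constructor
    · intro _
      exact transfer_to_borel hd ((mem_TF_iff a b M₀).mp hM₀)
    · intro _
      intro hzero
      have hc : MvPolynomial.coeff
          (Finsupp.equivFunOnFinite.symm (fun p : Fin n × Fin n => M₀ p.1 p.2))
          (∑ M ∈ TF, (muM M : MvPolynomial (Fin n × Fin n) K) *
            ∏ i, ∏ j, (X (i, j) : MvPolynomial (Fin n × Fin n) K) ^ M i j)
          = (muM M₀ : K) := by
        rw [Finset.sum_congr rfl (fun M _ => transfer_term_eq M), coeff_sum]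
        rw [Finset.sum_eq_single M₀]
        · rw [coeff_monomial, if_pos rfl]
        · intro M _ hMne
          rw [coeff_monomial, if_neg]
          intro h
          apply hMne
          have := Finsupp.equivFunOnFinite.symm.injective h
          funext i j
          exact congrFun this (i, j)
        · intro h; exact absurd hM₀ h
      rw [hzero] at hc
      rw [coeff_zero] at hc
      have : (0:ℕ) < muM M₀ := muM_pos M₀
      have : ((muM M₀ : K)) ≠ 0 := Nat.cast_ne_zero.mpr (by omega)
      exact this hc.symm

end Final

/-- over `T = K[Y_{ij} : 1 ≤ i ≤ j ≤ n]`, let `φ : T[X] → T[X]` be the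
generic upper triangular coordinate change `X_j ↦ Σ_{i ≤ j} Y_{ij} X_i`.  Then the
coefficient `α^b_a` of `X^a` in `φ(X^b)` equals `Σ_{M ∈ U(a,b)} μ_M Y^M`, and in
particular `α^b_a ≠ 0` iff `a ≥_Bor b`. -/
theorem stmt4 {K : Type*} [Field K] [CharZero K] {n d : ℕ}
    (a b : Fin n → ℕ) (ha : ∑ i, a i = d) (hb : ∑ i, b i = d) :
    MvPolynomial.coeff (expF a)
      ((aeval fun j : Fin n =>
          ∑ i ∈ Finset.univ.filter (fun i : Fin n => i ≤ j),
            (C (X (i, j) : MvPolynomial (Fin n × Fin n) K) *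
              X i : MvPolynomial (Fin n) (MvPolynomial (Fin n × Fin n) K)))
        (mono (MvPolynomial (Fin n × Fin n) K) b)) =
      (∑ᶠ M ∈ {M : Matrix (Fin n) (Fin n) ℕ | IsTransferMatrix M a b},
        (muM M : MvPolynomial (Fin n × Fin n) K) *
          ∏ i, ∏ j, (X (i, j) : MvPolynomial (Fin n × Fin n) K) ^ M i j) ∧
    (MvPolynomial.coeff (expF a)
      ((aeval fun j : Fin n =>
          ∑ i ∈ Finset.univ.filter (fun i : Fin n => i ≤ j),
            (C (X (i, j) : MvPolynomial (Fin n × Fin n) K) *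
              X i : MvPolynomial (Fin n) (MvPolynomial (Fin n × Fin n) K)))
        (mono (MvPolynomial (Fin n × Fin n) K) b)) ≠ 0 ↔ BorelGE a b) := by
  subst hb
  exact stmt4' a b ha

end Fumasoli
end

section
/- Let b, c ∈ ℕ^n_d and ρ ∈ ℤ^n with b + ρ, c + ρ ∈ ℕ^n_d and b_i = c_i for all 1 ≤ i < m(ρ). Suppose b ≥_Bor c. Then for every M ∈ U(b,c) one has μ_M = μ_{M+ρ}, where M + ρ adds ρ_j to the j-th diagonal entry of M. -/
open MvPolynomial

namespace Fumasoli

lemma mult_single_aux {n : ℕ} (g : Fin n → ℕ) (j : Fin n) (h : ∀ i, i ≠ j → g i = 0) :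
    Nat.multinomial Finset.univ g = 1 := by
  unfold Nat.multinomial
  rw [Finset.sum_eq_single_of_mem j (Finset.mem_univ j) (fun i _ hi => h i hi),
    Finset.prod_eq_single_of_mem j (Finset.mem_univ j)
      (fun i _ hi => by rw [h i hi]; rfl)]
  exact Nat.div_self (Nat.factorial_pos _)

/-- if `b ≥_Bor c`, `b_i = c_i` for `i < m(ρ)` and `M ∈ U(b,c)`, then
`μ_M = μ_{M+ρ}`. -/
theorem stmt5 {n d : ℕ} (b c : Fin n → ℕ) (ρ : Fin n → ℤ)
    (hb : ∑ i, b i = d) (hc : ∑ i, c i = d)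
    (hbρ : ∀ i, 0 ≤ (b i : ℤ) + ρ i) (hbρd : (∑ i, ((b i : ℤ) + ρ i)) = (d : ℤ))
    (hcρ : ∀ i, 0 ≤ (c i : ℤ) + ρ i) (hcρd : (∑ i, ((c i : ℤ) + ρ i)) = (d : ℤ))
    (heq : ∀ i : Fin n, (i : ℕ) + 1 < mIdx ρ → b i = c i)
    (hBor : BorelGE b c)
    (M : Matrix (Fin n) (Fin n) ℕ) (hM : IsTransferMatrix M b c) :
    muM M = muM (addDiag M ρ) := by
  obtain ⟨htri, hcol, hrow⟩ := hM
  -- rows i with i+1 < mIdx ρ are concentrated on the diagonal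
  have key0 : ∀ (v : ℕ) (i : Fin n), (i : ℕ) = v →
      (i : ℕ) + 1 < mIdx ρ → ∀ j : Fin n, j ≠ i → M i j = 0 := by
    intro v
    induction v using Nat.strong_induction_on with
    | _ v ih =>
      intro i hiv hi j hj
      have ih' : ∀ k : Fin n, (k : ℕ) < (i : ℕ) →
          (k : ℕ) + 1 < mIdx ρ → ∀ j : Fin n, j ≠ k → M k j = 0 := by
        intro k hk
        exact ih (k : ℕ) (by omega) k rfl
      -- column i of M is concentrated on the diagonal
      have hci : c i = M i i := by
        rw [← hcol i]
        refine Finset.sum_eq_single_of_mem i (Finset.mem_univ i) ?_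
        intro k _ hk
        rcases lt_or_gt_of_ne (fun h => hk (Fin.ext h) : (k : ℕ) ≠ (i : ℕ)) with h | h
        · exact ih' k h (by omega) i (fun h' => hk h'.symm)
        · exact htri k i h
      -- row sum b i equals c i = M i i, so off-diagonal entries of row i vanish
      have hsum : ∑ j' ∈ Finset.univ.erase i, M i j' = 0 := by
        have h1 : (∑ j' ∈ Finset.univ.erase i, M i j') + M i i = ∑ j', M i j' :=
          Finset.sum_erase_add _ _ (Finset.mem_univ i)
        have h2 : ∑ j', M i j' = b i := hrow i
        have h3 : b i = c i := heq i hi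
        omega
      exact Finset.sum_eq_zero_iff.mp hsum j (Finset.mem_erase.mpr ⟨hj, Finset.mem_univ j⟩)
  have key : ∀ i : Fin n, (i : ℕ) + 1 < mIdx ρ → ∀ j : Fin n, j ≠ i → M i j = 0 :=
    fun i => key0 (i : ℕ) i rfl
  -- columns j with ρ j ≠ 0 are concentrated on the diagonal
  have colkey : ∀ j : Fin n, ρ j ≠ 0 → ∀ i : Fin n, i ≠ j → M i j = 0 := by
    intro j hρ i hij
    have hjm : (j : ℕ) + 1 ≤ mIdx ρ := by
      refine le_trans ?_ (le_max_right _ _)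
      exact Finset.le_sup (f := fun i : Fin n => (i : ℕ) + 1)
        (Finset.mem_filter.mpr ⟨Finset.mem_univ j, hρ⟩)
    rcases lt_or_gt_of_ne (fun h => hij (Fin.ext h) : (i : ℕ) ≠ (j : ℕ)) with h | h
    · exact key i (by omega) j (fun h' => hij h'.symm)
    · exact htri i j h
  unfold muM
  refine Finset.prod_congr rfl ?_
  intro j _
  by_cases hρ : ρ j = 0
  · refine congrArg _ (funext fun i => ?_)
    unfold addDiag
    by_cases hij : i = j
    · subst hij; simp [hρ]
    · simp [hij]
  · rw [mult_single_aux (fun i => M i j) j (fun i hi => colkey j hρ i hi),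
      mult_single_aux (fun i => addDiag M ρ i j) j ?_]
    intro i hi
    unfold addDiag
    simp only [if_neg hi]
    exact colkey j hρ i hi

end Fumasoli
end

section
/- Let (A, C, ρ) be a binomial system of degree d in n indeterminates over a field K, and suppose ρ_{m(ρ)} > 0 where m(ρ) = max{i : ρ_i ≠ 0}. Then the set X^A ∪ {X^c − X^{c+ρ} : c ∈ C} is a Gröbner basis of the ideal F(A,C,ρ) = (X^A ∪ {X^c − X^{c+ρ} : c ∈ C}) with respect to the reverse lexicographic order; in particular in_rlex F(A,C,ρ) = (X^{A∪C}). -/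
open MvPolynomial

namespace Fumasoli

section Aux

open Classical in
/-- `m` is divisible by some element of `B`. -/
def DivOf {n : ℕ} (B : Set (Fin n → ℕ)) (m : Fin n → ℕ) : Prop :=
  ∃ b ∈ B, ∀ i, b i ≤ m i

/-- Add `ρ` to `m` (componentwise, truncated). -/
def shiftm {n : ℕ} (ρ : Fin n → ℤ) (m : Fin n → ℕ) : Fin n → ℕ :=
  fun i => ((m i : ℤ) + ρ i).toNat

/-- Bundled hypotheses extracted from `IsBinomialSystem` and `mPos`. -/
structure Good (n d : ℕ) (A C : Set (Fin n → ℕ)) (ρ : Fin n → ℤ) (im : Fin n) : Prop where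
  hA : ∀ a ∈ A, ∑ i, a i = d
  hC : ∀ c ∈ C, ∑ i, c i = d
  hCρnn : ∀ c ∈ C, ∀ i, 0 ≤ (c i : ℤ) + ρ i
  hCρdeg : ∀ c ∈ C, (∑ i, ((c i : ℤ) + ρ i)) = (d : ℤ)
  hAC : A ∩ C = ∅
  hACs : A ∩ shiftSet C ρ = ∅
  hCCs : C ∩ shiftSet C ρ = ∅
  hB1 : IsBorelSet (A ∪ C)
  hB2 : IsBorelSet (A ∪ shiftSet C ρ)
  hpos : 0 < ρ im
  hhi : ∀ j : Fin n, im < j → ρ j = 0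

theorem good_of (n d : ℕ) (A C : Set (Fin n → ℕ)) (ρ : Fin n → ℤ)
    (hB : IsBinomialSystem d A C ρ) (hm : mPos ρ) : ∃ im, Good n d A C ρ im := by
  obtain ⟨i, hi, hpos⟩ := hm
  obtain ⟨h1, h2, h3, h4, h5, h6, h7, h8, h9⟩ := hB
  refine ⟨i, h1, h2, h3, h4, h5, h6, h7, h8, h9, hpos, ?_⟩
  intro j hj
  by_contra hne
  have hmem : j ∈ Finset.univ.filter fun k => ρ k ≠ 0 := by
    simp [hne]
  have hle := Finset.le_sup (f := fun k : Fin n => (k : ℕ) + 1) hmem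
  have : (j : ℕ) + 1 ≤ mIdx ρ := le_trans hle (le_max_right _ _)
  omega

namespace Good

variable {n d : ℕ} {A C : Set (Fin n → ℕ)} {ρ : Fin n → ℤ} {im : Fin n}

theorem sum_rho (hG : Good n d A C ρ im) {c : Fin n → ℕ} (hc : c ∈ C) :
    ∑ i, ρ i = 0 := by
  have h1 := hG.hC c hc
  have h2 := hG.hCρdeg c hc
  have : (∑ i, (c i : ℤ)) + ∑ i, ρ i = (d : ℤ) := by
    rw [← Finset.sum_add_distrib]; exact h2
  have h3 : (∑ i, (c i : ℤ)) = (d : ℤ) := by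
    have := h1
    push_cast [← this]
    rfl
  omega

theorem shiftm_deg (hG : Good n d A C ρ im) {c m : Fin n → ℕ} (hc : c ∈ C)
    (hle : ∀ i, c i ≤ m i) : ∑ i, shiftm ρ m i = ∑ i, m i := by
  have key : ∀ i, (shiftm ρ m i : ℤ) = (m i : ℤ) + ρ i := by
    intro i
    have := hG.hCρnn c hc i
    have h2 : 0 ≤ (m i : ℤ) + ρ i := by
      have := hle i
      omega
    simp [shiftm, Int.toNat_of_nonneg h2]
  have : (∑ i, (shiftm ρ m i : ℤ)) = ∑ i, ((m i : ℤ) + ρ i) := by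
    exact Finset.sum_congr rfl fun i _ => key i
  have h4 : (∑ i, (shiftm ρ m i : ℤ)) = (∑ i, (m i : ℤ)) + ∑ i, ρ i := by
    rw [this, Finset.sum_add_distrib]
  rw [hG.sum_rho hc, add_zero] at h4
  exact_mod_cast h4

end Good

/-! rlex basics -/

theorem rlex_irrefl {ν : ℕ} (a : Fin ν → ℕ) : ¬ rlexLT a a := by
  rintro (h | ⟨-, k, hk, -⟩)
  · omega
  · omega

theorem rlex_trans {ν : ℕ} {a b c : Fin ν → ℕ} (h1 : rlexLT a b) (h2 : rlexLT b c) :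
    rlexLT a c := by
  rcases h1 with h1 | ⟨e1, k1, hk1, hj1⟩
  · rcases h2 with h2 | ⟨e2, -⟩
    · exact Or.inl (h1.trans h2)
    · exact Or.inl (e2 ▸ h1)
  · rcases h2 with h2 | ⟨e2, k2, hk2, hj2⟩
    · exact Or.inl (e1 ▸ h2)
    · refine Or.inr ⟨e1.trans e2, ?_⟩
      rcases lt_trichotomy k1 k2 with h | h | h
      · exact ⟨k2, by rw [hj1 k2 h]; exact hk2, fun j hj => (hj1 j (h.trans hj)).trans (hj2 j hj)⟩
      · subst h
        exact ⟨k1, hk1.trans' hk2, fun j hj => (hj1 j hj).trans (hj2 j hj)⟩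
      · exact ⟨k1, by rw [← hj2 k1 h]; exact hk1, fun j hj => (hj1 j hj).trans (hj2 j (h.trans hj))⟩

theorem rlex_asymm {ν : ℕ} {a b : Fin ν → ℕ} (h : rlexLT a b) : ¬ rlexLT b a :=
  fun h' => rlex_irrefl a (rlex_trans h h')

end Aux
section Prefix

variable {n : ℕ}

/-- prefix sum of first `k` entries. -/
def pk (v : Fin n → ℕ) (k : ℕ) : ℕ := ∑ i, if i.val < k then v i else 0

def pkz (v : Fin n → ℤ) (k : ℕ) : ℤ := ∑ i, if i.val < k then v i else 0

theorem pk_zero (v : Fin n → ℕ) : pk v 0 = 0 := by simp [pk]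

theorem pk_succ (v : Fin n → ℕ) (i : Fin n) :
    pk v (i.val + 1) = pk v i.val + v i := by
  unfold pk
  have h1 : ∀ j : Fin n, (if j.val < i.val + 1 then v j else 0) =
      (if j.val < i.val then v j else 0) + (if j = i then v j else 0) := by
    intro j
    rcases eq_or_ne j i with rfl | hne
    · simp
    · have : j.val ≠ i.val := fun h => hne (Fin.ext h)
      split_ifs <;> omega
  rw [Finset.sum_congr rfl fun j _ => h1 j, Finset.sum_add_distrib,
    Finset.sum_ite_eq' Finset.univ i v]
  simp

theorem pkz_succ (v : Fin n → ℤ) (i : Fin n) :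
    pkz v (i.val + 1) = pkz v i.val + v i := by
  unfold pkz
  have h1 : ∀ j : Fin n, (if j.val < i.val + 1 then v j else 0) =
      (if j.val < i.val then v j else 0) + (if j = i then v j else 0) := by
    intro j
    rcases eq_or_ne j i with rfl | hne
    · simp
    · have : j.val ≠ i.val := fun h => hne (Fin.ext h)
      split_ifs <;> omega
  rw [Finset.sum_congr rfl fun j _ => h1 j, Finset.sum_add_distrib,
    Finset.sum_ite_eq' Finset.univ i v]
  simp

theorem pk_mono (v : Fin n → ℕ) {k l : ℕ} (h : k ≤ l) : pk v k ≤ pk v l :=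
  Finset.sum_le_sum fun i _ => by split_ifs <;> omega

theorem pk_top (v : Fin n → ℕ) {k : ℕ} (h : n ≤ k) : pk v k = ∑ i, v i :=
  Finset.sum_congr rfl fun i _ => if_pos (lt_of_lt_of_le i.isLt h)

theorem pk_le_sum (v : Fin n → ℕ) (k : ℕ) : pk v k ≤ ∑ i, v i := by
  rcases le_or_gt n k with h | h
  · exact le_of_eq (pk_top v h)
  · exact (pk_mono v (le_of_lt h)).trans (le_of_eq (pk_top v le_rfl))

theorem pk_mono_vec {x y : Fin n → ℕ} (h : ∀ i, x i ≤ y i) (k : ℕ) : pk x k ≤ pk y k :=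
  Finset.sum_le_sum fun i _ => by split_ifs with h' <;> simp [h i]

theorem pk_stable {x : Fin n → ℕ} {k : ℕ} (h : ∀ i : Fin n, k ≤ i.val → x i = 0) :
    pk x k = ∑ i, x i := by
  refine Finset.sum_congr rfl fun i _ => ?_
  rcases lt_or_ge i.val k with h' | h'
  · exact if_pos h'
  · rw [if_neg (by omega), h i h']

theorem pk_cast (v : Fin n → ℕ) (k : ℕ) : ((pk v k : ℕ) : ℤ) = pkz (fun i => (v i : ℤ)) k := by
  unfold pk pkz
  push_cast
  exact Finset.sum_congr rfl fun i _ => by split_ifs <;> simp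

theorem borelGE_of_prefix {x y : Fin n → ℕ} (h : ∀ k, pk y k ≤ pk x k)
    (hd : ∑ i, x i = ∑ i, y i) : BorelGE x y := by
  refine ⟨fun j => pk x j - pk y j, by simp [pk_zero], fun j hj => ?_, fun i => ?_⟩
  · show pk x j - pk y j = 0
    rw [pk_top x hj, pk_top y hj, hd, Nat.sub_self]
  · have c1 : ((pk x (i.val + 1) - pk y (i.val + 1) : ℕ) : ℤ) =
        (pk x (i.val + 1) : ℤ) - (pk y (i.val + 1) : ℤ) := by
      have := h (i.val + 1); omega
    have c2 : ((pk x i.val - pk y i.val : ℕ) : ℤ) =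
        (pk x i.val : ℤ) - (pk y i.val : ℤ) := by
      have := h i.val; omega
    rw [c1, c2]
    have e1 : (pk x (i.val+1) : ℤ) = pk x i.val + x i := by exact_mod_cast pk_succ x i
    have e2 : (pk y (i.val+1) : ℤ) = pk y i.val + y i := by exact_mod_cast pk_succ y i
    rw [e1, e2]; ring

end Prefix

namespace Good

variable {n d : ℕ} {A C : Set (Fin n → ℕ)} {ρ : Fin n → ℤ} {im : Fin n}

theorem shiftm_coe (hG : Good n d A C ρ im) {c m : Fin n → ℕ} (hc : c ∈ C)
    (hcm : ∀ i, c i ≤ m i) (i : Fin n) : (shiftm ρ m i : ℤ) = (m i : ℤ) + ρ i := by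
  have h1 := hG.hCρnn c hc i
  have h2 := hcm i
  simp only [shiftm]
  rw [Int.toNat_of_nonneg (by omega)]

/-- THE KEY LEMMA: if `m` is divisible by some `a ∈ A` and some `c ∈ C`, then `m + ρ`
is divisible by some element of `A`. -/
theorem key (hG : Good n d A C ρ im) {a c m : Fin n → ℕ} (ha : a ∈ A) (hc : c ∈ C)
    (ham : ∀ i, a i ≤ m i) (hcm : ∀ i, c i ≤ m i) : DivOf A (shiftm ρ m) := by
  classical
  set v := shiftm ρ m with hv
  have hvi : ∀ i, (v i : ℤ) = (m i : ℤ) + ρ i := hG.shiftm_coe hc hcm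
  have hdegm : d ≤ ∑ i, m i := by
    rw [← hG.hC c hc]; exact Finset.sum_le_sum fun i _ => hcm i
  have hdegv : ∑ i, v i = ∑ i, m i := hG.shiftm_deg hc hcm
  -- the greedy prefix function
  set G : ℕ → ℕ := fun k => min (pk v k) d with hGdef
  set g : Fin n → ℕ := fun i => G (i.val + 1) - G i.val with hgdef
  have hGmono : ∀ {k l : ℕ}, k ≤ l → G k ≤ G l := fun h =>
    min_le_min (pk_mono v h) le_rfl
  have hgG : ∀ i : Fin n, G i.val + g i = G (i.val + 1) := by
    intro i
    have : G i.val ≤ G (i.val + 1) := hGmono (by omega)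
    simp only [hgdef]; omega
  have hgv : ∀ i, g i ≤ v i := by
    intro i
    have h1 : pk v (i.val + 1) = pk v i.val + v i := pk_succ v i
    simp only [hgdef, hGdef]; omega
  have hpkg : ∀ k, k ≤ n → pk g k = G k := by
    intro k hk
    induction k with
    | zero => simp [pk_zero, hGdef]
    | succ k ih =>
      have hkn : k < n := hk
      have e1 : pk g (k + 1) = pk g k + g ⟨k, hkn⟩ := pk_succ g ⟨k, hkn⟩
      rw [e1, ih (le_of_lt hkn)]
      exact hgG ⟨k, hkn⟩
  have hdegg : ∑ i, g i = d := by
    rw [← pk_top g (le_refl n), hpkg n le_rfl]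
    simp only [hGdef]
    rw [pk_top v le_rfl, hdegv]
    omega
  -- g dominates c+ρ, hence lies in B₂
  have hscC : shiftm ρ c ∈ shiftSet C ρ := by
    refine ⟨c, hc, fun i => ?_⟩
    have := hG.hCρnn c hc i
    simp [shiftm, Int.toNat_of_nonneg this]
  have hdegsc : ∑ i, shiftm ρ c i = d := by
    have : ((∑ i, shiftm ρ c i : ℕ) : ℤ) = (d : ℤ) := by
      push_cast
      rw [Finset.sum_congr rfl fun i _ => by
        have := hG.hCρnn c hc i
        show ((shiftm ρ c i : ℕ) : ℤ) = (c i : ℤ) + ρ i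
        simp [shiftm, Int.toNat_of_nonneg this]]
      exact hG.hCρdeg c hc
    exact_mod_cast this
  have hgB2 : g ∈ A ∪ shiftSet C ρ := by
    refine hG.hB2 g (shiftm ρ c) ?_ (Or.inr hscC)
    refine borelGE_of_prefix (fun k => ?_) (by rw [hdegg, hdegsc])
    have h1 : pk (shiftm ρ c) k ≤ pk v k :=
      pk_mono_vec (fun i => by
        have h2 := hG.hCρnn c hc i
        have h3 := hcm i
        simp only [hv, shiftm]
        apply Int.toNat_le_toNat
        omega) k
    have h2 : pk (shiftm ρ c) k ≤ d := by
      have := pk_le_sum (shiftm ρ c) k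
      omega
    rcases le_or_gt k n with hk | hk
    · rw [hpkg k hk]
      simp only [hGdef]
      omega
    · have e1 : pk g k = d := by rw [pk_top g (le_of_lt hk), hdegg]
      have e2 : pk (shiftm ρ c) k = d := by rw [pk_top (shiftm ρ c) (le_of_lt hk), hdegsc]
      omega
  rcases hgB2 with hgA | hgs
  · exact ⟨g, hgA, hgv⟩
  · -- g = c₁ + ρ : derive a contradiction
    obtain ⟨c₁, hc₁, hgc₁⟩ := hgs
    exfalso
    -- t : least k with d ≤ pk v k
    have hex : ∃ k, d ≤ pk v k := ⟨n, by rw [pk_top v le_rfl, hdegv]; exact hdegm⟩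
    set t := Nat.find hex with htdef
    have ht : d ≤ pk v t := Nat.find_spec hex
    have htlt : ∀ k < t, pk v k < d := fun k hk => by
      have := Nat.find_min hex hk; omega
    have htn : t ≤ n := Nat.find_le (by rw [pk_top v le_rfl, hdegv]; exact hdegm)
    have hGlow : ∀ k < t, G k = pk v k := fun k hk => by
      have := htlt k hk; simp only [hGdef]; omega
    have hGhigh : ∀ k, t ≤ k → G k = d := fun k hk => by
      have := pk_mono v hk; simp only [hGdef]; omega
    -- entries of g vanish at positions ≥ t, hence ρ ≤ 0 there
    have hg0 : ∀ i : Fin n, t ≤ i.val → g i = 0 := by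
      intro i hi
      simp only [hgdef]
      rw [hGhigh i.val hi, hGhigh (i.val+1) (by omega)]
      omega
    have hrle : ∀ i : Fin n, t ≤ i.val → ρ i ≤ 0 := by
      intro i hi
      have h1 := hgc₁ i
      rw [hg0 i hi] at h1
      have : (0:ℤ) ≤ (c₁ i : ℤ) := Int.natCast_nonneg _
      omega
    have himt : im.val < t := by
      by_contra h
      have := hrle im (by omega)
      have := hG.hpos
      omega
    have hr0 : ∀ i : Fin n, t ≤ i.val → ρ i = 0 := by
      intro i hi
      exact hG.hhi i (by
        show im.val < i.val
        omega)
    have hc₁0 : ∀ i : Fin n, t ≤ i.val → c₁ i = 0 := by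
      intro i hi
      have h1 := hgc₁ i
      rw [hg0 i hi, hr0 i hi] at h1
      omega
    -- c₁ dominates a
    have hdegc₁ : ∑ i, c₁ i = d := hG.hC c₁ hc₁
    have hc₁a : BorelGE c₁ a := by
      refine borelGE_of_prefix (fun k => ?_) (by rw [hdegc₁, hG.hA a ha])
      rcases le_or_gt t k with hk | hk
      · have e1 : pk c₁ k = d := by
          rw [pk_stable (fun i hi => hc₁0 i (le_trans hk hi)), hdegc₁]
        have := pk_le_sum a k
        rw [hG.hA a ha] at this
        omega
      · -- k < t : pk c₁ k = pk m k ≥ pk a k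
        have hkn : k ≤ n := by omega
        have e0 : pk g k = pk v k := by rw [hpkg k hkn, hGlow k hk]
        have e1 : (pk g k : ℤ) = pk c₁ k + pkz ρ k := by
          rw [pk_cast, pk_cast]
          unfold pkz
          rw [← Finset.sum_add_distrib]
          refine Finset.sum_congr rfl fun i _ => ?_
          have := hgc₁ i
          split_ifs <;> simp only [add_zero] at this ⊢ <;> omega
        have e2 : (pk v k : ℤ) = pk m k + pkz ρ k := by
          rw [pk_cast, pk_cast]
          unfold pkz
          rw [← Finset.sum_add_distrib]
          refine Finset.sum_congr rfl fun i _ => ?_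
          have := hvi i
          split_ifs <;> simp only [add_zero] at this ⊢ <;> omega
        have e3 : pk c₁ k = pk m k := by
          have : (pk g k : ℤ) = pk v k := by exact_mod_cast e0
          omega
        have := pk_mono_vec ham k
        omega
    have : c₁ ∈ A ∪ shiftSet C ρ := hG.hB2 c₁ a hc₁a (Or.inl ha)
    rcases this with h | h
    · exact Set.eq_empty_iff_forall_notMem.mp hG.hAC c₁ ⟨h, hc₁⟩
    · exact Set.eq_empty_iff_forall_notMem.mp hG.hCCs c₁ ⟨hc₁, h⟩

end Good
section Measure

theorem geom_pos {B : ℤ} (hB : 1 ≤ B) {r : ℕ → ℤ} {t N : ℕ} (ht : t < N)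
    (hpos : 1 ≤ r t) (hhi : ∀ j, t < j → r j = 0) (hlo : ∀ j, -(B-1) ≤ r j) :
    0 < ∑ j ∈ Finset.range N, B^j * r j := by
  have hz : ∑ j ∈ Finset.Ico (t+1) N, B^j * r j = 0 := by
    refine Finset.sum_eq_zero fun j hj => ?_
    rw [hhi j (by simp at hj; omega)]; ring
  have hsplit : ∑ j ∈ Finset.range N, B^j * r j = ∑ j ∈ Finset.range (t+1), B^j * r j := by
    calc ∑ j ∈ Finset.range N, B^j * r j
        = (∑ j ∈ Finset.Ico 0 (t+1), B^j * r j) + ∑ j ∈ Finset.Ico (t+1) N, B^j * r j := by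
          rw [Finset.range_eq_Ico, Finset.sum_Ico_consecutive _ (Nat.zero_le _) (by omega)]
      _ = ∑ j ∈ Finset.range (t+1), B^j * r j := by
          rw [hz, add_zero, Finset.range_eq_Ico]
  rw [hsplit, Finset.sum_range_succ]
  have hstep : ∑ j ∈ Finset.range t, (-(B-1)) * B^j ≤ ∑ j ∈ Finset.range t, B^j * r j := by
    refine Finset.sum_le_sum fun j _ => ?_
    have hBj : (0:ℤ) ≤ B^j := pow_nonneg (by omega) j
    have := hlo j
    nlinarith
  have hid : ∑ j ∈ Finset.range t, (-(B-1)) * B^j = -((B-1) * ∑ j ∈ Finset.range t, B^j) := by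
    rw [← Finset.mul_sum]; ring
  have h2 : (∑ j ∈ Finset.range t, B^j) * (B - 1) = B^t - 1 := geom_sum_mul B t
  have h3 : B^t * r t ≥ B^t := le_mul_of_one_le_right (pow_nonneg (by omega) t) hpos
  nlinarith [hstep, hid, h2, h3]

/-- digit measure for termination. -/
def mu {n : ℕ} (v : Fin n → ℕ) : ℕ :=
  ∑ i, ((∑ j, v j) + 1)^(i.val) * ((∑ j, v j) - v i)

namespace Good

variable {n d : ℕ} {A C : Set (Fin n → ℕ)} {ρ : Fin n → ℤ} {im : Fin n}

theorem rlex_shift (hG : Good n d A C ρ im) {c m : Fin n → ℕ} (hc : c ∈ C)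
    (hcm : ∀ i, c i ≤ m i) : rlexLT (shiftm ρ m) m := by
  refine Or.inr ⟨hG.shiftm_deg hc hcm, im, ?_, fun j hj => ?_⟩
  · have h1 := hG.shiftm_coe hc hcm im
    have h2 := hG.hpos
    omega
  · have h1 := hG.shiftm_coe hc hcm j
    have h2 := hG.hhi j hj
    omega

theorem mu_lt (hG : Good n d A C ρ im) {c m : Fin n → ℕ} (hc : c ∈ C)
    (hcm : ∀ i, c i ≤ m i) : mu (shiftm ρ m) < mu m := by
  have hdeg : ∑ j, shiftm ρ m j = ∑ j, m j := hG.shiftm_deg hc hcm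
  set D := ∑ j, m j with hD
  set B : ℤ := (D : ℤ) + 1 with hB
  have hvle : ∀ (w : Fin n → ℕ), (∀ i, w i ≤ ∑ j, w j) := fun w i =>
    Finset.single_le_sum (f := fun j => w j) (fun _ _ => Nat.zero_le _) (Finset.mem_univ i)
  have hcast : ∀ (w : Fin n → ℕ), (∑ j, w j) = D → ((mu w : ℕ) : ℤ) =
      ∑ i : Fin n, B^(i.val) * ((D : ℤ) - w i) := by
    intro w hw
    unfold mu
    rw [hw]
    push_cast
    refine Finset.sum_congr rfl fun i _ => ?_
    have := hvle w i
    rw [hw] at this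
    have : ((D - w i : ℕ) : ℤ) = (D : ℤ) - w i := by omega
    rw [this]
  have e1 := hcast _ hdeg
  have e2 := hcast m rfl
  have hdiff : (mu m : ℤ) - mu (shiftm ρ m) = ∑ i : Fin n, B^(i.val) *
      ((shiftm ρ m i : ℤ) - m i) := by
    rw [e1, e2, ← Finset.sum_sub_distrib]
    refine Finset.sum_congr rfl fun i _ => by ring
  -- rewrite as a range sum
  set r : ℕ → ℤ := fun j => if h : j < n then ((shiftm ρ m ⟨j, h⟩ : ℤ) - m ⟨j, h⟩) else 0
    with hr
  have hsum : ∑ i : Fin n, B^(i.val) * ((shiftm ρ m i : ℤ) - m i) =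
      ∑ j ∈ Finset.range n, B^j * r j := by
    rw [Finset.sum_range fun j => B^j * r j]
    refine Finset.sum_congr rfl fun i _ => ?_
    simp [hr]
  have hpos0 : 0 < ∑ j ∈ Finset.range n, B^j * r j := by
    refine geom_pos (by omega) (t := im.val) im.isLt ?_ ?_ ?_
    · simp only [hr, dif_pos im.isLt]
      have h1 := hG.shiftm_coe hc hcm im
      have h2 := hG.hpos
      simp only [Fin.eta]
      omega
    · intro j hj
      simp only [hr]
      split_ifs with h
      · have h1 := hG.shiftm_coe hc hcm ⟨j, h⟩
        have h2 := hG.hhi ⟨j, h⟩ (by rw [Fin.lt_def]; exact hj)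
        omega
      · rfl
    · intro j
      simp only [hr]
      split_ifs with h
      · have h1 : (0:ℤ) ≤ (shiftm ρ m ⟨j,h⟩ : ℤ) := Int.natCast_nonneg _
        have h2 : (m ⟨j,h⟩ : ℤ) ≤ D := by
          have := hvle m ⟨j,h⟩
          omega
        simp only [hB]
        omega
      · simp only [hB]; omega
  omega

end Good

end Measure

open Classical in
noncomputable def phi0 (K : Type*) [Field K] {n d : ℕ} (A C : Set (Fin n → ℕ))
    (ρ : Fin n → ℤ) (im : Fin n) (hG : Good n d A C ρ im) (m : Fin n → ℕ) :
    MvPolynomial (Fin n) K :=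
  if DivOf A m then 0
  else if h : DivOf C m then phi0 K A C ρ im hG (shiftm ρ m)
  else mono K m
termination_by mu m
decreasing_by
  obtain ⟨c, hc, hcm⟩ := h
  exact hG.mu_lt hc hcm
section Phi0

variable {K : Type*} [Field K] {n d : ℕ} {A C : Set (Fin n → ℕ)} {ρ : Fin n → ℤ}
  {im : Fin n}

theorem expF_coe {ν : ℕ} (a : Fin ν → ℕ) : ⇑(expF a) = a :=
  Finsupp.equivFunOnFinite.apply_symm_apply a

theorem expF_add {ν : ℕ} (a b : Fin ν → ℕ) : expF (a + b) = expF a + expF b := by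
  ext i
  simp [expF]

theorem expF_inj {ν : ℕ} {a b : Fin ν → ℕ} (h : expF a = expF b) : a = b := by
  exact Finsupp.equivFunOnFinite.symm.injective h

theorem supp_mono (m : Fin n → ℕ) : (mono K m).support = {expF m} := by
  classical
  rw [mono, support_monomial, if_neg one_ne_zero]

theorem phi0_of_A (hG : Good n d A C ρ im) {m : Fin n → ℕ} (h : DivOf A m) :
    phi0 K A C ρ im hG m = 0 := by
  rw [phi0, if_pos h]

theorem phi0_eq_shift (hG : Good n d A C ρ im) {m : Fin n → ℕ} (h : DivOf C m) :
    phi0 K A C ρ im hG m = phi0 K A C ρ im hG (shiftm ρ m) := by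
  by_cases hA : DivOf A m
  · rw [phi0_of_A hG hA]
    obtain ⟨a, ha, ham⟩ := hA
    obtain ⟨c, hc, hcm⟩ := h
    rw [phi0_of_A hG (hG.key ha hc ham hcm)]
  · rw [phi0, if_neg hA, dif_pos h]

theorem phi0_std (hG : Good n d A C ρ im) {m : Fin n → ℕ} (hA : ¬ DivOf A m)
    (hC : ¬ DivOf C m) : phi0 K A C ρ im hG m = mono K m := by
  rw [phi0, if_neg hA, dif_neg hC]

theorem phi0_supp (hG : Good n d A C ρ im) (m : Fin n → ℕ) :
    ∀ m' ∈ (phi0 K A C ρ im hG m).support, (⇑m' : Fin n → ℕ) = m ∨ rlexLT ⇑m' m := by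
  intro m' hm'
  by_cases hA : DivOf A m
  · rw [phi0_of_A hG hA] at hm'
    simp at hm'
  · by_cases hC : DivOf C m
    · obtain ⟨c, hc, hcm⟩ := hC
      rw [phi0_eq_shift hG ⟨c, hc, hcm⟩] at hm'
      have hlt : rlexLT (shiftm ρ m) m := hG.rlex_shift hc hcm
      rcases phi0_supp hG (shiftm ρ m) m' hm' with h | h
      · exact Or.inr (h ▸ hlt)
      · exact Or.inr (rlex_trans h hlt)
    · rw [phi0_std hG hA hC, supp_mono] at hm'
      rw [Finset.mem_singleton] at hm'
      subst hm'
      exact Or.inl (by rw [expF_coe])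
termination_by mu m
decreasing_by exact hG.mu_lt hc hcm

end Phi0
section PhiLin

variable {K : Type*} [Field K] {n d : ℕ} {A C : Set (Fin n → ℕ)} {ρ : Fin n → ℤ}
  {im : Fin n}

noncomputable def Phi (K : Type*) [Field K] {n d : ℕ} (A C : Set (Fin n → ℕ))
    (ρ : Fin n → ℤ) (im : Fin n) (hG : Good n d A C ρ im) :
    MvPolynomial (Fin n) K →ₗ[K] MvPolynomial (Fin n) K :=
  (Finsupp.lsum K fun m : Fin n →₀ ℕ =>
    LinearMap.smulRight (LinearMap.id : K →ₗ[K] K) (phi0 K A C ρ im hG ⇑m)) ∘ₗ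
    (AddMonoidAlgebra.coeffLinearEquiv K).toLinearMap

theorem Phi_monomial (hG : Good n d A C ρ im) (u : Fin n →₀ ℕ) (r : K) :
    Phi K A C ρ im hG (monomial u r) = r • phi0 K A C ρ im hG ⇑u := by
  show (Finsupp.lsum K fun m : Fin n →₀ ℕ =>
    LinearMap.smulRight (LinearMap.id : K →ₗ[K] K) (phi0 K A C ρ im hG ⇑m))
      (Finsupp.single u r) = _
  rw [Finsupp.lsum_single]
  rfl

theorem divA_left (hG : Good n d A C ρ im) {a : Fin n → ℕ} (ha : a ∈ A) (u : Fin n → ℕ) :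
    DivOf A (u + a) := ⟨a, ha, fun i => by simp⟩

theorem Phi_mul_monoA (hG : Good n d A C ρ im) {a : Fin n → ℕ} (ha : a ∈ A)
    (q : MvPolynomial (Fin n) K) : Phi K A C ρ im hG (q * mono K a) = 0 := by
  induction q using MvPolynomial.induction_on' with
  | monomial u r =>
    rw [mono, monomial_mul, Phi_monomial, mul_one]
    have hcoe : (⇑(u + expF a) : Fin n → ℕ) = ⇑u + a := by
      rw [Finsupp.coe_add, expF_coe]
    rw [hcoe, phi0_of_A hG (divA_left hG ha ⇑u), smul_zero]
  | add p q hp hq =>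
    rw [add_mul, map_add, hp, hq, add_zero]

theorem Phi_mul_binC (hG : Good n d A C ρ im) {c : Fin n → ℕ} (hc : c ∈ C)
    (q : MvPolynomial (Fin n) K) :
    Phi K A C ρ im hG (q * (mono K c - mono K (shiftVec ρ c))) = 0 := by
  induction q using MvPolynomial.induction_on' with
  | monomial u r =>
    rw [mul_sub, mono, mono, monomial_mul, monomial_mul, map_sub, Phi_monomial,
      Phi_monomial, mul_one]
    have hcoe1 : (⇑(u + expF c) : Fin n → ℕ) = ⇑u + c := by
      rw [Finsupp.coe_add, expF_coe]
    have hcoe2 : (⇑(u + expF (shiftVec ρ c)) : Fin n → ℕ) = ⇑u + shiftVec ρ c := by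
      rw [Finsupp.coe_add, expF_coe]
    have hshift : (⇑u + shiftVec ρ c : Fin n → ℕ) = shiftm ρ (⇑u + c) := by
      funext i
      have h1 := hG.hCρnn c hc i
      simp only [Pi.add_apply, shiftVec, shiftm]
      omega
    rw [hcoe1, hcoe2, hshift,
      phi0_eq_shift hG (⟨c, hc, fun i => by simp⟩ : DivOf C (⇑u + c)), sub_self]
  | add p q hp hq =>
    rw [add_mul, map_add, hp, hq, add_zero]

/-- The ideal of polynomials all of whose multiples are annihilated by `Phi`. -/
noncomputable def Tideal (K : Type*) [Field K] {n d : ℕ} (A C : Set (Fin n → ℕ))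
    (ρ : Fin n → ℤ) (im : Fin n) (hG : Good n d A C ρ im) :
    Ideal (MvPolynomial (Fin n) K) where
  carrier := {f | ∀ q, Phi K A C ρ im hG (q * f) = 0}
  add_mem' := fun hf hg q => by rw [mul_add, map_add, hf q, hg q, add_zero]
  zero_mem' := fun q => by rw [mul_zero, map_zero]
  smul_mem' := fun r f hf q => by
    rw [smul_eq_mul, ← mul_assoc]
    exact hf (q * r)

theorem Phi_F_zero (hG : Good n d A C ρ im) {f : MvPolynomial (Fin n) K}
    (hf : f ∈ Fideal K A C ρ) : Phi K A C ρ im hG f = 0 := by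
  have hle : Fideal K A C ρ ≤ Tideal K A C ρ im hG := by
    rw [Fideal, Ideal.span_le]
    rintro g (⟨a, ha, rfl⟩ | ⟨c, hc, rfl⟩)
    · exact fun q => Phi_mul_monoA hG ha q
    · exact fun q => Phi_mul_binC hG hc q
  have := hle hf 1
  rwa [one_mul] at this

theorem divOf_union {B B' : Set (Fin n → ℕ)} {m : Fin n → ℕ} :
    DivOf (B ∪ B') m ↔ DivOf B m ∨ DivOf B' m := by
  constructor
  · rintro ⟨b, (hb | hb), hle⟩
    · exact Or.inl ⟨b, hb, hle⟩
    · exact Or.inr ⟨b, hb, hle⟩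
  · rintro (⟨b, hb, hle⟩ | ⟨b, hb, hle⟩)
    · exact ⟨b, Or.inl hb, hle⟩
    · exact ⟨b, Or.inr hb, hle⟩

/-- MAIN: the leading monomial of any nonzero element of `F` is divisible by `A ∪ C`. -/
theorem lead_in (hG : Good n d A C ρ im) {f : MvPolynomial (Fin n) K}
    (hf : f ∈ Fideal K A C ρ) {l : Fin n →₀ ℕ} (hl : IsLeadOf rlexLT f l) :
    DivOf (A ∪ C) ⇑l := by
  by_contra hstd
  rw [divOf_union] at hstd
  push_neg at hstd
  have hA := hstd.1
  have hC := hstd.2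
  have h0 : Phi K A C ρ im hG f = 0 := Phi_F_zero hG hf
  have hexp : f = ∑ v ∈ f.support, monomial v (coeff v f) := (as_sum f)
  have h1 : Phi K A C ρ im hG f = ∑ v ∈ f.support, coeff v f • phi0 K A C ρ im hG ⇑v := by
    conv_lhs => rw [hexp]
    rw [map_sum]
    exact Finset.sum_congr rfl fun v _ => Phi_monomial hG v (coeff v f)
  have h2 : coeff l (Phi K A C ρ im hG f) = coeff l f := by
    rw [h1]
    rw [MvPolynomial.coeff_sum]
    rw [Finset.sum_eq_single l]
    · rw [phi0_std hG hA hC, coeff_smul, mono]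
      have : expF (⇑l) = l := Finsupp.equivFunOnFinite.symm_apply_apply l
      rw [this, coeff_monomial, if_pos rfl, smul_eq_mul, mul_one]
    · intro v hv hne
      rw [coeff_smul]
      have hnotin : l ∉ (phi0 K A C ρ im hG ⇑v).support := by
        intro hin
        rcases phi0_supp hG ⇑v l hin with h | h
        · exact hne (DFunLike.coe_injective h).symm
        · exact rlex_asymm h (hl.2 v hv hne)
      rw [MvPolynomial.notMem_support_iff.mp hnotin, smul_eq_mul, mul_zero]
    · intro hno
      exact absurd hl.1 hno
  rw [h0, coeff_zero] at h2
  exact MvPolynomial.mem_support_iff.mp hl.1 h2.symm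

end PhiLin
section Assemble

variable {K : Type*} [Field K] {n d : ℕ} {A C : Set (Fin n → ℕ)} {ρ : Fin n → ℤ}
  {im : Fin n}

theorem mono_ne_zero (m : Fin n → ℕ) : (mono K m : MvPolynomial (Fin n) K) ≠ 0 := by
  intro h
  have := supp_mono (K := K) m
  rw [h] at this
  exact Finset.singleton_ne_empty _ this.symm

theorem lead_monoA (b : Fin n → ℕ) :
    IsLeadOf rlexLT (mono K b : MvPolynomial (Fin n) K) (expF b) := by
  constructor
  · rw [supp_mono]; exact Finset.mem_singleton_self _
  · intro m' hm' hne
    rw [supp_mono, Finset.mem_singleton] at hm'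
    exact absurd hm' hne

theorem shiftVec_eq_shiftm (c : Fin n → ℕ) : shiftVec ρ c = shiftm ρ c := rfl

theorem bin_ne (hG : Good n d A C ρ im) {c : Fin n → ℕ} (hc : c ∈ C) :
    expF (shiftVec ρ c) ≠ expF c := by
  intro h
  have h2 : shiftVec ρ c = c := expF_inj h
  have h3 := congrFun h2 im
  have h4 := hG.shiftm_coe hc (fun i => le_refl (c i)) im
  rw [shiftVec_eq_shiftm] at h3
  have := hG.hpos
  omega

theorem supp_bin (hG : Good n d A C ρ im) {c : Fin n → ℕ} (hc : c ∈ C) :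
    (mono K c - mono K (shiftVec ρ c)).support = {expF c, expF (shiftVec ρ c)} := by
  classical
  have hne := bin_ne hG hc
  ext m
  simp only [MvPolynomial.mem_support_iff, coeff_sub, mono, coeff_monomial,
    Finset.mem_insert, Finset.mem_singleton]
  split_ifs with h1 h2 h2
  · exact absurd (h2.trans h1.symm) hne
  · simp [h1.symm, sub_zero]
  · constructor
    · intro _; right; exact h2.symm
    · intro _
      simp only [zero_sub, neg_ne_zero]
      exact one_ne_zero
  · constructor
    · intro h; exact absurd (by ring) h
    · rintro (h | h)
      · exact absurd h.symm h1
      · exact absurd h.symm h2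

theorem lead_bin (hG : Good n d A C ρ im) {c : Fin n → ℕ} (hc : c ∈ C) :
    IsLeadOf rlexLT (mono K c - mono K (shiftVec ρ c)) (expF c) := by
  have hne := bin_ne hG hc
  constructor
  · rw [supp_bin hG hc]; exact Finset.mem_insert_self _ _
  · intro m' hm' hne'
    rw [supp_bin hG hc, Finset.mem_insert, Finset.mem_singleton] at hm'
    rcases hm' with rfl | rfl
    · exact absurd rfl hne'
    · rw [expF_coe, expF_coe, shiftVec_eq_shiftm]
      exact hG.rlex_shift hc fun i => le_refl (c i)

theorem bin_nonzero (hG : Good n d A C ρ im) {c : Fin n → ℕ} (hc : c ∈ C) :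
    (mono K c - mono K (shiftVec ρ c) : MvPolynomial (Fin n) K) ≠ 0 := by
  intro h
  have := supp_bin (K := K) hG hc
  rw [h] at this
  have : expF c ∈ (0 : MvPolynomial (Fin n) K).support := by
    rw [this]; exact Finset.mem_insert_self _ _
  simp at this

theorem mono_mem_of_div {l : Fin n →₀ ℕ} (hb : DivOf (A ∪ C) ⇑l) :
    (monomial l (1:K)) ∈ Ideal.span ((fun a => mono K a) '' (A ∪ C)) := by
  obtain ⟨b, hbm, hle⟩ := hb
  have hfin : l - expF b + expF b = l := by
    ext i
    have h1 := hle i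
    have h2 : expF b i = b i := congrFun (expF_coe b) i
    rw [Finsupp.add_apply, Finsupp.tsub_apply, h2]
    omega
  have key : monomial l (1:K) = monomial (l - expF b) 1 * mono K b := by
    rw [mono, monomial_mul, mul_one, hfin]
  rw [key]
  exact Ideal.mul_mem_left _ _ (Ideal.subset_span ⟨b, hbm, rfl⟩)

end Assemble
section Final

variable {K : Type*} [Field K] {n d : ℕ} {A C : Set (Fin n → ℕ)} {ρ : Fin n → ℤ}
  {im : Fin n}

theorem initial_eq (hG : Good n d A C ρ im) :
    initialIdeal rlexLT (Fideal K A C ρ) =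
      Ideal.span ((fun a => mono K a) '' (A ∪ C)) := by
  apply le_antisymm
  · rw [initialIdeal, Ideal.span_le]
    rintro p ⟨f, hf, hf0, m, hlm, rfl⟩
    exact mono_mem_of_div (lead_in hG hf hlm)
  · rw [Ideal.span_le]
    rintro p ⟨b, hb, rfl⟩
    apply Ideal.subset_span
    rcases hb with hbA | hbC
    · exact ⟨mono K b, Ideal.subset_span (Or.inl ⟨b, hbA, rfl⟩), mono_ne_zero b,
        expF b, lead_monoA b, rfl⟩
    · exact ⟨mono K b - mono K (shiftVec ρ b), Ideal.subset_span (Or.inr ⟨b, hbC, rfl⟩),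
        bin_nonzero hG hbC, expF b, lead_bin hG hbC, rfl⟩

theorem span_leads_eq (hG : Good n d A C ρ im) :
    Ideal.span {p | ∃ g ∈ ((fun a => mono K a) '' A ∪
        (fun c => mono K c - mono K (shiftVec ρ c)) '' C), g ≠ 0 ∧
        ∃ m, IsLeadOf rlexLT g m ∧ p = monomial m (1:K)} =
      Ideal.span ((fun a => mono K a) '' (A ∪ C)) := by
  apply le_antisymm
  · rw [Ideal.span_le]
    rintro p ⟨g, hg, hg0, m, hlm, rfl⟩
    rcases hg with ⟨a, ha, rfl⟩ | ⟨c, hc, rfl⟩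
    · have hm := hlm.1
      rw [supp_mono, Finset.mem_singleton] at hm
      subst hm
      exact Ideal.subset_span ⟨a, Or.inl ha, rfl⟩
    · have hm := hlm.1
      rw [supp_bin hG hc, Finset.mem_insert, Finset.mem_singleton] at hm
      rcases hm with rfl | rfl
      · exact Ideal.subset_span ⟨c, Or.inr hc, rfl⟩
      · exfalso
        have h1 := hlm.2 (expF c) (by
          rw [supp_bin hG hc]; exact Finset.mem_insert_self _ _) (Ne.symm (bin_ne hG hc))
        rw [expF_coe, expF_coe, shiftVec_eq_shiftm] at h1
        exact rlex_asymm (hG.rlex_shift hc fun i => le_refl (c i)) h1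
  · rw [Ideal.span_le]
    rintro p ⟨b, hb, rfl⟩
    apply Ideal.subset_span
    rcases hb with hbA | hbC
    · exact ⟨mono K b, Or.inl ⟨b, hbA, rfl⟩, mono_ne_zero b, expF b, lead_monoA b, rfl⟩
    · exact ⟨mono K b - mono K (shiftVec ρ b), Or.inr ⟨b, hbC, rfl⟩,
        bin_nonzero hG hbC, expF b, lead_bin hG hbC, rfl⟩

end Final


/-- for a binomial system with `ρ_{m(ρ)} > 0`, the monomials `X^a` (`a ∈ A`)
together with the binomials `X^c - X^{c+ρ}` (`c ∈ C`) form a Gröbner basis of `F(A,C,ρ)`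
w.r.t. the reverse lexicographic order; in particular `in_rlex F(A,C,ρ) = (X^{A∪C})`. -/
theorem stmt9 {K : Type*} [Field K] {n d : ℕ}
    (A C : Set (Fin n → ℕ)) (ρ : Fin n → ℤ)
    (hB : IsBinomialSystem d A C ρ) (hm : mPos ρ) :
    IsGroebnerBasis rlexLT
      ((fun a => mono K a) '' A ∪ (fun c => mono K c - mono K (shiftVec ρ c)) '' C)
      (Fideal K A C ρ) ∧
    initialIdeal rlexLT (Fideal K A C ρ) =
      Ideal.span ((fun a => mono K a) '' (A ∪ C)) := by
  obtain ⟨im, hG⟩ := good_of n d A C ρ hB hm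
  refine ⟨⟨fun g hg => Ideal.subset_span hg, ?_⟩, initial_eq hG⟩
  exact (initial_eq hG).trans (span_leads_eq hG).symm

end Fumasoli
end

section
/- Let (A,C,ρ) be a binomial system with ρ_{m(ρ)} > 0 and let m(ρ) ≤ i ≤ n. Then F(A,C,ρ) ∩ K[X_1,…,X_i] = F(A_i, C_i, (ρ_1,…,ρ_i)), where A_i = {(a_1,…,a_i) : (a_1,…,a_i,0,…,0) ∈ A} and likewise for C_i. -/
open MvPolynomial

namespace Fumasoli

section Aux

variable {K : Type*} [CommSemiring K]

/-- Projection `K[X_1,…,X_ν] → K[X_1,…,X_i]` sending `X_j ↦ 0` for `j > i`. -/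
noncomputable def projAlg (K : Type*) [CommSemiring K] (ν i : ℕ) :
    MvPolynomial (Fin ν) K →ₐ[K] MvPolynomial (Fin i) K :=
  aeval (fun j : Fin ν => if h : (j : ℕ) < i then X ⟨j, h⟩ else 0)

/-- Extension of an exponent vector by zeros. -/
def extVec {ν : ℕ} (i : ℕ) (x : Fin i → ℕ) : Fin ν → ℕ :=
  fun j => if hj : (j : ℕ) < i then x ⟨j, hj⟩ else 0

lemma mem_restrSet_iff {ν i : ℕ} (A : Set (Fin ν → ℕ)) (x : Fin i → ℕ) :
    x ∈ restrSet i A ↔ extVec i x ∈ A := Iff.rfl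

lemma expF_apply {ν : ℕ} (a : Fin ν → ℕ) (j : Fin ν) : expF a j = a j := rfl

lemma trunc_extVec {i ν : ℕ} (h : i ≤ ν) (x : Fin i → ℕ) :
    (fun k : Fin i => (extVec i x : Fin ν → ℕ) (Fin.castLE h k)) = x := by
  funext k
  unfold extVec
  exact dif_pos k.isLt

lemma expF_mapDomain {i ν : ℕ} (h : i ≤ ν) (x : Fin i → ℕ) :
    Finsupp.mapDomain (Fin.castLE h) (expF x) = expF (extVec i x) := by
  ext j
  by_cases hj : (j : ℕ) < i
  · have hje : j = Fin.castLE h ⟨j, hj⟩ := by ext; rfl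
    rw [hje, Finsupp.mapDomain_apply (Fin.castLE_injective h)]
    exact (congrFun (trunc_extVec h x) ⟨j, hj⟩).symm
  · rw [Finsupp.mapDomain_notin_range]
    · simp [expF_apply, extVec, hj]
    · rintro ⟨k, rfl⟩
      exact hj k.isLt

lemma incl_mono {i ν : ℕ} (h : i ≤ ν) (x : Fin i → ℕ) :
    inclAlg K h (mono K x) = mono K (extVec i x) := by
  unfold inclAlg mono
  rw [rename_monomial, expF_mapDomain]

lemma proj_incl {i ν : ℕ} (h : i ≤ ν) (p : MvPolynomial (Fin i) K) :
    projAlg K ν i (inclAlg K h p) = p := by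
  have : (projAlg K ν i).comp (inclAlg K h) = AlgHom.id K _ := by
    apply MvPolynomial.algHom_ext
    intro k
    simp only [AlgHom.comp_apply, inclAlg, rename_X, projAlg, aeval_X, AlgHom.id_apply]
    exact dif_pos k.isLt
  calc projAlg K ν i (inclAlg K h p) = ((projAlg K ν i).comp (inclAlg K h)) p := rfl
    _ = p := by rw [this]; rfl

lemma extVec_trunc {i ν : ℕ} (h : i ≤ ν) (a : Fin ν → ℕ)
    (ha : ∀ j : Fin ν, i ≤ (j : ℕ) → a j = 0) :
    extVec i (fun k : Fin i => a (Fin.castLE h k)) = a := by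
  funext j
  unfold extVec
  split
  · rfl
  · exact (ha j (le_of_not_gt ‹_›)).symm

lemma proj_mono_trunc {i ν : ℕ} (h : i ≤ ν) (a : Fin ν → ℕ)
    (ha : ∀ j : Fin ν, i ≤ (j : ℕ) → a j = 0) :
    projAlg K ν i (mono K a) = mono K (fun k : Fin i => a (Fin.castLE h k)) := by
  conv_lhs => rw [← extVec_trunc h a ha, ← incl_mono h, proj_incl]

lemma proj_mono_zero {i ν : ℕ} (a : Fin ν → ℕ) (j : Fin ν)
    (hj : i ≤ (j : ℕ)) (h0 : a j ≠ 0) :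
    projAlg K ν i (mono K a) = 0 := by
  unfold projAlg mono
  rw [aeval_monomial]
  have : ((expF a).prod fun k e =>
      (if h : (k : ℕ) < i then (X ⟨k, h⟩ : MvPolynomial (Fin i) K) else 0) ^ e) = 0 := by
    apply Finset.prod_eq_zero (i := j)
    · rw [Finsupp.mem_support_iff]
      exact h0
    · show (if h : (j : ℕ) < i then (X ⟨j, h⟩ : MvPolynomial (Fin i) K) else 0) ^
          (expF a j) = 0
      rw [dif_neg (not_lt.2 hj), expF_apply, zero_pow h0]
  rw [this, mul_zero]

lemma rho_zero_of_ge {ν : ℕ} (ρ : Fin ν → ℤ) {i : ℕ} (hρ : mIdx ρ ≤ i)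
    (j : Fin ν) (hj : i ≤ (j : ℕ)) : ρ j = 0 := by
  by_contra h
  have h1 : (j : ℕ) + 1 ≤ mIdx ρ := by
    refine le_trans ?_ (le_max_right _ _)
    exact Finset.le_sup (f := fun k : Fin ν => (k : ℕ) + 1)
      (Finset.mem_filter.2 ⟨Finset.mem_univ j, h⟩)
  omega

lemma shiftVec_extVec {i ν : ℕ} (h : i ≤ ν) (ρ : Fin ν → ℤ)
    (hρ0 : ∀ j : Fin ν, i ≤ (j : ℕ) → ρ j = 0) (x : Fin i → ℕ) :
    shiftVec ρ (extVec i x) =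
      extVec i (shiftVec (fun k : Fin i => ρ (Fin.castLE h k)) x) := by
  funext j
  unfold shiftVec extVec
  by_cases hj : (j : ℕ) < i
  · rw [dif_pos hj, dif_pos hj]
    rfl
  · rw [dif_neg hj, dif_neg hj, hρ0 j (le_of_not_gt hj)]
    simp

end Aux
/-- for a binomial system with `ρ_{m(ρ)} > 0` and `m(ρ) ≤ i ≤ n`,
`F(A,C,ρ) ∩ K[X_1,…,X_i] = F(A_i, C_i, (ρ_1,…,ρ_i))`. -/
theorem stmt11 {K : Type*} [Field K] {n d : ℕ}
    (A C : Set (Fin n → ℕ)) (ρ : Fin n → ℤ)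
    (hB : IsBinomialSystem d A C ρ) (hm : mPos ρ)
    (i : ℕ) (h1 : mIdx ρ ≤ i) (h2 : i ≤ n) :
    Ideal.comap (inclAlg K h2) (Fideal K A C ρ) =
      Fideal K (restrSet i A) (restrSet i C) (fun j : Fin i => ρ (Fin.castLE h2 j)) := by
  have hρ0 : ∀ j : Fin n, i ≤ (j : ℕ) → ρ j = 0 := rho_zero_of_ge ρ h1
  set ρ' : Fin i → ℤ := fun j => ρ (Fin.castLE h2 j) with hρ'
  apply le_antisymm
  · intro f hf
    have hf' : inclAlg K h2 f ∈ Fideal K A C ρ := hf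
    have h3 : f = projAlg K n i (inclAlg K h2 f) := (proj_incl h2 f).symm
    have hmap : Ideal.map (projAlg K n i) (Fideal K A C ρ) ≤
        Fideal K (restrSet i A) (restrSet i C) ρ' := by
      rw [Fideal, Ideal.map_span]
      apply Ideal.span_le.2
      rintro _ ⟨g, hg, rfl⟩
      rcases hg with ⟨a, ha, rfl⟩ | ⟨c, hc, rfl⟩
      · by_cases hz : ∀ j : Fin n, i ≤ (j : ℕ) → a j = 0
        · rw [proj_mono_trunc h2 a hz]
          exact Ideal.subset_span (Or.inl ⟨_,
            (mem_restrSet_iff A _).2 (by rw [extVec_trunc h2 a hz]; exact ha), rfl⟩)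
        · push_neg at hz
          obtain ⟨j, hj, h0⟩ := hz
          rw [proj_mono_zero a j hj h0]
          exact zero_mem _
      · by_cases hz : ∀ j : Fin n, i ≤ (j : ℕ) → c j = 0
        · have hz' : ∀ j : Fin n, i ≤ (j : ℕ) → shiftVec ρ c j = 0 := by
            intro j hj
            unfold shiftVec
            rw [hρ0 j hj, hz j hj]
            rfl
          rw [map_sub, proj_mono_trunc h2 c hz, proj_mono_trunc h2 _ hz']
          have htr : (fun k : Fin i => shiftVec ρ c (Fin.castLE h2 k)) =
              shiftVec ρ' (fun k : Fin i => c (Fin.castLE h2 k)) := rfl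
          rw [htr]
          exact Ideal.subset_span (Or.inr ⟨_,
            (mem_restrSet_iff C _).2 (by rw [extVec_trunc h2 c hz]; exact hc), rfl⟩)
        · push_neg at hz
          obtain ⟨j, hj, h0⟩ := hz
          have h0' : shiftVec ρ c j ≠ 0 := by
            unfold shiftVec
            rw [hρ0 j hj]
            simpa using h0
          rw [map_sub, proj_mono_zero c j hj h0, proj_mono_zero _ j hj h0', sub_zero]
          exact zero_mem _
    rw [h3]
    exact hmap (Ideal.mem_map_of_mem _ hf')
  · refine Ideal.span_le.2 ?_
    rintro g (⟨x, hx, rfl⟩ | ⟨x, hx, rfl⟩)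
    · refine Ideal.mem_comap.2 ?_
      rw [incl_mono h2 x]
      exact Ideal.subset_span (Or.inl ⟨_, hx, rfl⟩)
    · refine Ideal.mem_comap.2 ?_
      rw [map_sub, incl_mono h2 x, incl_mono h2 _, ← shiftVec_extVec h2 ρ hρ0 x]
      exact Ideal.subset_span (Or.inr ⟨_, hx, rfl⟩)

end Fumasoli
end
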